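/- arXiv:1212.3403 — 5 statements merged into one kernel-verified Lean document; each statement's English description precedes it below -/
import Mathlib

section
/- In the layered auxiliary graph H constructed from G (which, for each vertex v_l of G other than the root r, contains D copies v_l^1,…,v_l^D; for each edge e=(v_j,v_l) of G not incident to r, contains the directed edges (v_j^i, v_l^{i+d(e)}) for i=1,…,D−d(e), each of cost c(e); for each edge (r,v_l), contains the edge (r, v_l^{d(e)}) of cost c(e); and for each terminal v_l ∈ S∖{r}, contains an extra terminal vertex v_l together with cost-0 edges (v_l^i, v_l) for i=1,…,D), every minimum-cost directed Steiner tree rooted at r spanning the terminal set S_H contains at most one vertex among the copies v_l^1,…,v_l^D, for each vertex v_l of G. -/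
/-!
Common framework.

A directed graph on a type `α` is given by a finite set of directed edges
`Finset (α × α)`.  A directed Steiner tree (arborescence) rooted at `r`
spanning a terminal set `T` is a finite edge set `R` such that no edge enters
the root, every vertex has in-degree at most one, the tail of every edge is
reachable from `r` inside `R` (hence every vertex of `R` is reachable from
`r` by a unique directed path), and every terminal of `T` is reachable
from `r` in `R`.
-/

/-- `b` is reachable from `a` using the directed edges of `R`. -/
def Reaches {α : Type*} (R : Finset (α × α)) (a b : α) : Prop :=
  Relation.ReflTransGen (fun x y => (x, y) ∈ R) a b

/-- `R` is a directed Steiner tree rooted at `r` spanning the terminal set `T`. -/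
def IsDirSteinerTree {α : Type*} [DecidableEq α] (R : Finset (α × α)) (r : α)
    (T : Finset α) : Prop :=
  (∀ e ∈ R, e.2 ≠ r) ∧
  (∀ v : α, (R.filter fun e => e.2 = v).card ≤ 1) ∧
  (∀ e ∈ R, Reaches R r e.1) ∧
  (∀ t ∈ T, Reaches R r t)

/-- The total cost of the edge set `R` under the edge-cost function `c`. -/
def treeCost {α : Type*} (c : α × α → ℕ) (R : Finset (α × α)) : ℕ :=
  ∑ e ∈ R, c e

/-- `x` is a vertex of the edge set `R` (an endpoint of some edge of `R`). -/
def MemVerts {α : Type*} (R : Finset (α × α)) (x : α) : Prop :=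
  ∃ e ∈ R, e.1 = x ∨ e.2 = x

/-- `R` is a minimum-cost directed Steiner tree rooted at `r` spanning `T`
inside the directed graph with edge set `Edges`, w.r.t. the cost `c`. -/
def IsMinDirSteinerTree {α : Type*} [DecidableEq α] (c : α × α → ℕ)
    (Edges R : Finset (α × α)) (r : α) (T : Finset α) : Prop :=
  R ⊆ Edges ∧ IsDirSteinerTree R r T ∧
    ∀ R' ⊆ Edges, IsDirSteinerTree R' r T → treeCost c R ≤ treeCost c R'

/-- `b` is reachable from `a` in `R` by a directed path of total delay
exactly `k` (delays given by `d`). -/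
def DelayReaches {α : Type*} (R : Finset (α × α)) (d : α × α → ℕ)
    (a b : α) (k : ℕ) : Prop :=
  Relation.ReflTransGen
    (fun p q : α × ℕ => (p.1, q.1) ∈ R ∧ q.2 = p.2 + d (p.1, q.1))
    (a, 0) (b, k)

/-- Vertices of the layered auxiliary graph `H` built from a graph on `V`:
`Sum.inl r` is the root, `Sum.inl v` (for a terminal `v ≠ r`) is the extra
terminal copy of `v`, and `Sum.inr (v, i)` is the layer copy `v^i`
(meaningful for `1 ≤ i ≤ D`). -/
abbrev AuxV (V : Type*) := V ⊕ (V × ℕ)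

/-- The edge set of the layered auxiliary graph `H`:
* for every edge `e = (v_j, v_l) ∈ E` not incident to the root `r` and every
  layer `i` with `1 ≤ i` and `i + d e ≤ D`, a directed edge
  `(v_j^i, v_l^{i+d e})`;
* for every edge `(r, v_l) ∈ E` (with `d e ≤ D`), a directed edge
  `(r, v_l^{d e})`;
* for every terminal `v ∈ S \ {r}` and every `1 ≤ i ≤ D`, a directed edge
  `(v^i, v)` into the extra terminal copy of `v`. -/
def auxEdges {V : Type*} [DecidableEq V] (E : Finset (V × V)) (d : V × V → ℕ)
    (S : Finset V) (r : V) (D : ℕ) : Finset (AuxV V × AuxV V) :=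
  (((E.filter fun e => e.1 ≠ r ∧ e.2 ≠ r) ×ˢ Finset.Icc 1 D).filter
      fun p => p.2 + d p.1 ≤ D).image
    (fun p => (Sum.inr (p.1.1, p.2), Sum.inr (p.1.2, p.2 + d p.1)))
  ∪ (E.filter fun e => e.1 = r ∧ e.2 ≠ r ∧ d e ≤ D).image
      (fun e => (Sum.inl r, Sum.inr (e.2, d e)))
  ∪ ((S.erase r) ×ˢ Finset.Icc 1 D).image
      (fun p => (Sum.inr (p.1, p.2), Sum.inl p.1))

/-- Costs of the edges of the auxiliary graph: an edge between copies of `a`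
and `b` inherits the cost `c (a, b)` of the underlying edge of `G`; the
edges into the extra terminal copies have cost `0`. -/
def auxCost {V : Type*} (c : V × V → ℕ) : AuxV V × AuxV V → ℕ
  | (Sum.inr (a, _), Sum.inr (b, _)) => c (a, b)
  | (Sum.inl a, Sum.inr (b, _)) => c (a, b)
  | _ => 0

/-- The terminal set `S_H` of the auxiliary graph: the root `Sum.inl r`
together with the extra terminal copies `Sum.inl v`, `v ∈ S \ {r}`;
i.e. the image of `S` under `Sum.inl`. -/
def auxTerminals {V : Type*} [DecidableEq V] (S : Finset V) : Finset (AuxV V) :=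
  S.image Sum.inl

/-- The projection of an edge set `R` of the auxiliary graph back to `G`:
the set of all edges `(v_j, v_l)` of `G` some copy of which belongs to `R`. -/
def projTree {V : Type*} [DecidableEq V] (R : Finset (AuxV V × AuxV V)) :
    Finset (V × V) :=
  R.biUnion fun p =>
    match p with
    | (Sum.inr (a, _), Sum.inr (b, _)) => {(a, b)}
    | (Sum.inl a, Sum.inr (b, _)) => {(a, b)}
    | _ => ∅

/- ## auxiliary lemmas -/

def reachN {α : Type*} (R : Finset (α × α)) (r : α) : ℕ → α → Prop
  | 0, x => x = r
  | (n+1), x => reachN R r n x ∨ ∃ y, reachN R r n y ∧ (y, x) ∈ R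

lemma reachN_mono {α : Type*} {R : Finset (α × α)} {r : α} {n m : ℕ} {x : α}
    (h : reachN R r n x) (hnm : n ≤ m) : reachN R r m x := by
  induction m with
  | zero => simpa [Nat.le_zero.mp hnm] using h
  | succ m ih =>
    rcases Nat.lt_or_ge n (m+1) with h' | h'
    · exact Or.inl (ih (Nat.lt_succ_iff.mp h'))
    · have : n = m + 1 := le_antisymm hnm h'
      subst this; exact h

lemma reaches_iff_reachN {α : Type*} {R : Finset (α × α)} {r x : α} :
    Reaches R r x ↔ ∃ n, reachN R r n x := by
  constructor
  · intro h
    induction h with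
    | refl => exact ⟨0, rfl⟩
    | tail _ he ih =>
      obtain ⟨n, hn⟩ := ih
      exact ⟨n + 1, Or.inr ⟨_, hn, he⟩⟩
  · rintro ⟨n, hn⟩
    induction n generalizing x with
    | zero => cases hn; exact Relation.ReflTransGen.refl
    | succ n ih =>
      rcases hn with h | ⟨y, hy, he⟩
      · exact ih h
      · exact (ih hy).tail he

lemma prune {α : Type*} [DecidableEq α] (c : α × α → ℕ) (R' : Finset (α × α))
    (r : α) (T : Finset α)
    (hnr : ∀ e ∈ R', e.2 ≠ r) (hreach : ∀ t ∈ T, Reaches R' r t) :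
    ∃ R'' ⊆ R', IsDirSteinerTree R'' r T ∧ treeCost c R'' ≤ treeCost c R' := by
  classical
  have hex : ∀ x, Reaches R' r x → x ≠ r →
      ∃ p : α × α, p.2 = x ∧ p ∈ R' ∧ ∃ m, reachN R' r m p.1 ∧ ¬ reachN R' r m x := by
    intro x hx hxr
    have hn : ∃ n, reachN R' r n x := reaches_iff_reachN.mp hx
    set N := Nat.find hn with hN
    have hNx : reachN R' r N x := Nat.find_spec hn
    have hN0 : N ≠ 0 := by
      intro h0
      rw [h0] at hNx
      exact hxr hNx
    obtain ⟨M, hM⟩ := Nat.exists_eq_succ_of_ne_zero hN0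
    rw [hM] at hNx
    have hMx : ¬ reachN R' r M x := Nat.find_min hn (by omega)
    rcases hNx with h | ⟨y, hy, he⟩
    · exact absurd h hMx
    · exact ⟨(y, x), rfl, he, M, hy, hMx⟩
  let pe : α → α × α := fun x =>
    if h : Reaches R' r x ∧ x ≠ r then Classical.choose (hex x h.1 h.2) else (r, x)
  have hpe : ∀ x (h : Reaches R' r x ∧ x ≠ r),
      (pe x).2 = x ∧ pe x ∈ R' ∧ ∃ m, reachN R' r m (pe x).1 ∧ ¬ reachN R' r m x := by
    intro x h
    simp only [pe, dif_pos h]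
    exact Classical.choose_spec (hex x h.1 h.2)
  set R'' := R'.filter (fun e => Reaches R' r e.2 ∧ e.2 ≠ r ∧ pe e.2 = e) with hR''
  have hsub : R'' ⊆ R' := Finset.filter_subset _ _
  have hmem : ∀ e ∈ R'', Reaches R' r e.2 ∧ e.2 ≠ r ∧ pe e.2 = e := by
    intro e he; exact (Finset.mem_filter.mp he).2
  have claim : ∀ n x, reachN R' r n x → Reaches R'' r x := by
    intro n
    induction n using Nat.strong_induction_on with
    | _ n ih =>
      intro x hx
      by_cases hxr : x = r
      · subst hxr; exact Relation.ReflTransGen.refl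
      · have hxR : Reaches R' r x := reaches_iff_reachN.mpr ⟨n, hx⟩
        obtain ⟨h2, hmem', m, hm1, hm2⟩ := hpe x ⟨hxR, hxr⟩
        have hmn : m < n := by
          by_contra h
          exact hm2 (reachN_mono hx (le_of_not_gt h))
        have hy : Reaches R'' r (pe x).1 := ih m hmn _ hm1
        have hpeR : pe x ∈ R'' := by
          rw [hR'', Finset.mem_filter]
          refine ⟨hmem', ?_, ?_, ?_⟩
          · rw [h2]; exact hxR
          · rw [h2]; exact hxr
          · rw [h2]
        have : ((pe x).1, x) ∈ R'' := by
          have := hpeR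
          rwa [show pe x = ((pe x).1, (pe x).2) from rfl, h2] at this
        exact hy.tail this
  have claim' : ∀ x, Reaches R' r x → Reaches R'' r x := by
    intro x hx
    obtain ⟨n, hn⟩ := reaches_iff_reachN.mp hx
    exact claim n x hn
  refine ⟨R'', hsub, ⟨?_, ?_, ?_, ?_⟩, ?_⟩
  · intro e he; exact (hmem e he).2.1
  · intro v
    rw [Finset.card_le_one]
    intro a ha b hb
    have ha' := Finset.mem_filter.mp ha
    have hb' := Finset.mem_filter.mp hb
    have h1 := (hmem a ha'.1).2.2
    have h2 := (hmem b hb'.1).2.2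
    rw [ha'.2] at h1
    rw [hb'.2] at h2
    rw [← h1, ← h2]
  · intro e he
    obtain ⟨hre, hner, hpee⟩ := hmem e he
    obtain ⟨h2, hmem', m, hm1, hm2⟩ := hpe e.2 ⟨hre, hner⟩
    rw [hpee] at h2 hm1
    exact claim m _ hm1
  · intro t ht; exact claim' t (hreach t ht)
  · exact Finset.sum_le_sum_of_subset hsub

lemma mem_auxEdges_iff {V : Type*} [DecidableEq V] {E : Finset (V × V)}
    {d : V × V → ℕ} {S : Finset V} {r : V} {D : ℕ} {e : AuxV V × AuxV V} :
    e ∈ auxEdges E d S r D ↔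
      (∃ u w k, (u, w) ∈ E ∧ u ≠ r ∧ w ≠ r ∧ 1 ≤ k ∧ k ≤ D ∧ k + d (u, w) ≤ D ∧
        e = (Sum.inr (u, k), Sum.inr (w, k + d (u, w)))) ∨
      (∃ w, (r, w) ∈ E ∧ w ≠ r ∧ d (r, w) ≤ D ∧
        e = (Sum.inl r, Sum.inr (w, d (r, w)))) ∨
      (∃ w k, w ∈ S ∧ w ≠ r ∧ 1 ≤ k ∧ k ≤ D ∧ e = (Sum.inr (w, k), Sum.inl w)) := by
  simp only [auxEdges, Finset.mem_union, Finset.mem_image, Finset.mem_filter,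
    Finset.mem_product, Finset.mem_Icc, Finset.mem_erase]
  constructor
  · rintro ((⟨⟨⟨u, w⟩, k⟩, ⟨⟨⟨he, hu, hw⟩, hk1, hk2⟩, hkd⟩, rfl⟩ | ⟨⟨u, w⟩, ⟨he, hu, hw, hd⟩, rfl⟩) | ⟨⟨w, k⟩, ⟨⟨hw, hwS⟩, hk1, hk2⟩, rfl⟩)
    · exact Or.inl ⟨u, w, k, he, hu, hw, hk1, hk2, hkd, rfl⟩
    · subst hu
      exact Or.inr (Or.inl ⟨w, he, hw, hd, rfl⟩)
    · exact Or.inr (Or.inr ⟨w, k, hwS, hw, hk1, hk2, rfl⟩)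
  · rintro (⟨u, w, k, he, hu, hw, hk1, hk2, hkd, rfl⟩ | ⟨w, he, hw, hd, rfl⟩ | ⟨w, k, hwS, hw, hk1, hk2, rfl⟩)
    · exact Or.inl (Or.inl ⟨⟨(u, w), k⟩, ⟨⟨⟨he, hu, hw⟩, ⟨hk1, hk2⟩⟩, hkd⟩, rfl⟩)
    · exact Or.inl (Or.inr ⟨(r, w), ⟨he, rfl, hw, hd⟩, rfl⟩)
    · exact Or.inr ⟨⟨w, k⟩, ⟨⟨hw, hwS⟩, hk1, hk2⟩, rfl⟩

lemma sum_image_le_nat {α β : Type*} [DecidableEq α] [DecidableEq β]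
    (s : Finset α) (g : α → β) (f : β → ℕ) :
    ∑ x ∈ s.image g, f x ≤ ∑ x ∈ s, f (g x) := by
  induction s using Finset.induction with
  | empty => simp
  | @insert a s ha ih =>
    rw [Finset.image_insert, Finset.sum_insert ha]
    by_cases hb : g a ∈ s.image g
    · rw [Finset.insert_eq_self.mpr hb]
      omega
    · rw [Finset.sum_insert hb]
      omega

open Classical in
noncomputable def shiftMap {V : Type*} (P : AuxV V → Prop) (s : ℕ) : AuxV V → AuxV V
  | Sum.inl w => Sum.inl w
  | Sum.inr (w, k) => if P (Sum.inr (w, k)) then Sum.inr (w, k - s) else Sum.inr (w, k)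

lemma shiftMap_inl {V : Type*} (P : AuxV V → Prop) (s : ℕ) (w : V) :
    shiftMap P s (Sum.inl w) = Sum.inl w := rfl

lemma shiftMap_pos {V : Type*} {P : AuxV V → Prop} (s : ℕ) {w : V} {k : ℕ}
    (h : P (Sum.inr (w, k))) : shiftMap P s (Sum.inr (w, k)) = Sum.inr (w, k - s) := by
  simp [shiftMap, h]

lemma shiftMap_neg {V : Type*} {P : AuxV V → Prop} (s : ℕ) {x : AuxV V}
    (h : ¬ P x ∨ ∃ w, x = Sum.inl w) : shiftMap P s x = x := by
  match x with
  | Sum.inl w => rfl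
  | Sum.inr (w, k) =>
    rcases h with h | ⟨w', hw⟩
    · simp [shiftMap, h]
    · exact absurd hw (by simp)


/-- Lemma 1 of the paper.
In the layered auxiliary graph `H = auxEdges E d S r D` constructed from `G`,
every minimum-cost directed Steiner tree `R` rooted at `r` spanning the
terminal set `S_H` contains, for each vertex `v` of `G`, at most one vertex
among the layer copies `v^1, …, v^D`. -/
theorem min_aux_steiner_tree_at_most_one_copy
    {V : Type*} [Fintype V] [DecidableEq V]
    (E : Finset (V × V)) (S : Finset V) (r : V) (hr : r ∈ S)
    (c : V × V → ℕ) (d : V × V → ℕ)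
    (hc : ∀ e ∈ E, 0 < c e) (hd : ∀ e ∈ E, 0 < d e)
    (D : ℕ) (hD : 0 < D)
    (R : Finset (AuxV V × AuxV V))
    (hR : IsMinDirSteinerTree (auxCost c) (auxEdges E d S r D) R
      (Sum.inl r) (auxTerminals S)) :
    ∀ v : V, ∀ i j : ℕ,
      MemVerts R (Sum.inr (v, i)) → MemVerts R (Sum.inr (v, j)) → i = j := by
  classical
  obtain ⟨hsubE, ⟨hroot, hdeg, htails, hterm⟩, hmin⟩ := hR
  -- every vertex of R is reachable from the root
  have hreach_vert : ∀ x, MemVerts R x → Reaches R (Sum.inl r) x := by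
    rintro x ⟨e, he, h | h⟩
    · rw [← h]; exact htails e he
    · rw [← h]; exact (htails e he).tail he
  -- layer of any inr-vertex is at least 1
  have hlayer1 : ∀ w k, MemVerts R (Sum.inr (w, k)) → 1 ≤ k := by
    rintro w k ⟨e, he, h⟩
    have hae := mem_auxEdges_iff.mp (hsubE he)
    rcases hae with ⟨u, w', k', hE, _, _, hk1, _, _, heq⟩ | ⟨w', hE, _, _, heq⟩ |
        ⟨w', k', _, _, hk1, _, heq⟩
    · have hd1 : 0 < d (u, w') := hd _ hE
      subst heq
      rcases h with h | h <;>
        · simp only [Sum.inr.injEq, Prod.mk.injEq] at h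
          omega
    · have hd1 : 0 < d (r, w') := hd _ hE
      subst heq
      rcases h with h | h
      · exact absurd h (by simp)
      · simp only [Sum.inr.injEq, Prod.mk.injEq] at h
        omega
    · subst heq
      rcases h with h | h
      · simp only [Sum.inr.injEq, Prod.mk.injEq] at h
        omega
      · exact absurd h (by simp)
  -- heads of auxiliary edges are never the root
  have haux_head : ∀ e ∈ auxEdges E d S r D, e.2 ≠ Sum.inl r := by
    intro e he h
    rcases mem_auxEdges_iff.mp he with ⟨u, w, k, _, _, _, _, _, _, heq⟩ |
        ⟨w, _, _, _, heq⟩ | ⟨w, k, _, hw, _, _, heq⟩ <;> subst heq <;> simp_all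
  -- reduce to the strict case
  suffices key : ∀ v (i j : ℕ), i < j → MemVerts R (Sum.inr (v, i)) →
      MemVerts R (Sum.inr (v, j)) → False by
    intro v i j hi hj
    rcases lt_trichotomy i j with h | h | h
    · exact (key v i j h hi hj).elim
    · exact h
    · exact (key v j i h hj hi).elim
  intro v i j hij hi hj
  have hi1 : 1 ≤ i := hlayer1 v i hi
  -- descendants of v^j
  set Desc : AuxV V → Prop := Reaches R (Sum.inr (v, j)) with hDesc
  have descP : ∀ x, Desc x →
      (∀ w k, x = Sum.inr (w, k) → j ≤ k) ∧ (∀ w, x = Sum.inl w → w ≠ r) := by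
    intro x hx
    induction hx with
    | refl =>
      refine ⟨?_, ?_⟩
      · rintro w k h
        simp only [Sum.inr.injEq, Prod.mk.injEq] at h
        omega
      · rintro w h
        exact absurd h (by simp)
    | tail hprev hedge ih =>
      rcases mem_auxEdges_iff.mp (hsubE hedge) with
        ⟨u, w, k, hE, hu, hw, hk1, hk2, hkd, heq⟩ | ⟨w, hE, hw, hdD, heq⟩ |
        ⟨w, k, hwS, hw, hk1, hk2, heq⟩ <;> rw [Prod.mk.injEq] at heq <;>
        obtain ⟨hb, hc⟩ := heq
      · have hjk : j ≤ k := ih.1 u k hb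
        refine ⟨?_, ?_⟩
        · rintro w' k' h
          rw [hc] at h
          simp only [Sum.inr.injEq, Prod.mk.injEq] at h
          omega
        · rintro w' h
          rw [hc] at h
          exact absurd h (by simp)
      · exact absurd rfl (ih.2 r hb)
      · refine ⟨?_, ?_⟩
        · rintro w' k' h
          rw [hc] at h
          exact absurd h (by simp)
        · rintro w' h
          rw [hc] at h
          simp only [Sum.inl.injEq] at h
          subst h
          exact hw
  have hdesc_vj : Desc (Sum.inr (v, j)) := Relation.ReflTransGen.refl
  have hnotdesc_vi : ¬ Desc (Sum.inr (v, i)) := fun h => by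
    have := (descP _ h).1 v i rfl
    omega
  have desc_tail : ∀ x y : AuxV V, (x, y) ∈ R → Desc y → y ≠ Sum.inr (v, j) → Desc x := by
    intro x y hxy hy hne
    rcases Relation.ReflTransGen.cases_tail hy with h | ⟨z, hz, hzy⟩
    · exact absurd h hne
    · have hzx : (z, y) = (x, y) :=
        Finset.card_le_one.mp (hdeg y) _ (Finset.mem_filter.mpr ⟨hzy, rfl⟩) _
          (Finset.mem_filter.mpr ⟨hxy, rfl⟩)
      have : z = x := congrArg Prod.fst hzx
      exact this ▸ hz
  set s := j - i with hs
  set φ : AuxV V → AuxV V := shiftMap Desc s with hφ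
  have hφvj : φ (Sum.inr (v, j)) = Sum.inr (v, i) := by
    rw [hφ, shiftMap_pos _ hdesc_vj]
    have : j - s = i := by omega
    rw [this]
  have hφcost : ∀ e : AuxV V × AuxV V, auxCost c (φ e.1, φ e.2) = auxCost c e := by
    rintro ⟨a, b⟩
    rcases a with w | ⟨w, k⟩ <;> rcases b with w' | ⟨w', k'⟩ <;>
      simp only [hφ, shiftMap, auxCost] <;> split_ifs <;> rfl
  set R' := (R.filter fun e => e.2 ≠ Sum.inr (v, j)).image (fun e => (φ e.1, φ e.2))
    with hR'
  -- R' lives in the auxiliary graph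
  have hR'sub : R' ⊆ auxEdges E d S r D := by
    intro f hf
    rw [hR', Finset.mem_image] at hf
    obtain ⟨e, he, rfl⟩ := hf
    obtain ⟨heR, hne⟩ := Finset.mem_filter.mp he
    rcases mem_auxEdges_iff.mp (hsubE heR) with
      ⟨u, w, k, hE, hu, hw, hk1, hk2, hkd, heq⟩ | ⟨w, hE, hw, hdD, heq⟩ |
      ⟨w, k, hwS, hw, hk1, hk2, heq⟩ <;> subst heq <;> dsimp only at hne ⊢
    · by_cases hdh : Desc (Sum.inr (w, k + d (u, w)))
      · have hdt : Desc (Sum.inr (u, k)) := desc_tail _ _ heR hdh hne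
        have hjk : j ≤ k := (descP _ hdt).1 u k rfl
        rw [hφ, shiftMap_pos _ hdt, shiftMap_pos _ hdh]
        refine mem_auxEdges_iff.mpr (Or.inl ⟨u, w, k - s, hE, hu, hw, by omega, by omega,
          by omega, ?_⟩)
        have hkk : k + d (u, w) - s = k - s + d (u, w) := by omega
        rw [hkk]
      · have hdt : ¬ Desc (Sum.inr (u, k)) := fun h => hdh (h.tail heR)
        rw [hφ, shiftMap_neg _ (Or.inl hdt), shiftMap_neg _ (Or.inl hdh)]
        exact hsubE heR
    · have hdh : ¬ Desc (Sum.inr (w, d (r, w))) := by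
        intro hdh
        have hdt : Desc (Sum.inl r) := desc_tail _ _ heR hdh hne
        exact (descP _ hdt).2 r rfl rfl
      rw [hφ, shiftMap_inl, shiftMap_neg _ (Or.inl hdh)]
      exact hsubE heR
    · by_cases hdt : Desc (Sum.inr (w, k))
      · have hjk : j ≤ k := (descP _ hdt).1 w k rfl
        rw [hφ, shiftMap_pos _ hdt, shiftMap_inl]
        exact mem_auxEdges_iff.mpr (Or.inr (Or.inr ⟨w, k - s, hwS, hw, by omega, by omega,
          rfl⟩))
      · rw [hφ, shiftMap_neg _ (Or.inl hdt), shiftMap_inl]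
        exact hsubE heR
  -- non-descendants keep their connection to the root in R'
  have hF3 : ∀ x, Reaches R (Sum.inl r) x → ¬ Desc x → Reaches R' (Sum.inl r) x := by
    intro x hx
    induction hx with
    | refl => exact fun _ => Relation.ReflTransGen.refl
    | @tail b cc hprev hedge ih =>
      intro hnd
      have hndb : ¬ Desc b := fun h => hnd (h.tail hedge)
      have hcb : cc ≠ Sum.inr (v, j) := fun h => hnd (h ▸ hdesc_vj)
      have hmem' : ((φ b, φ cc) : AuxV V × AuxV V) ∈ R' :=
        Finset.mem_image_of_mem _ (Finset.mem_filter.mpr ⟨hedge, hcb⟩)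
      rw [hφ, shiftMap_neg _ (Or.inl hndb), shiftMap_neg _ (Or.inl hnd)] at hmem'
      exact (ih hndb).tail hmem'
  have hvi_reach' : Reaches R' (Sum.inl r) (Sum.inr (v, i)) :=
    hF3 _ (hreach_vert _ hi) hnotdesc_vi
  have hF5 : ∀ x, Reaches R (Sum.inl r) x → Reaches R' (Sum.inl r) (φ x) := by
    intro x hx
    induction hx with
    | refl =>
      rw [hφ, shiftMap_inl]
      exact Relation.ReflTransGen.refl
    | @tail b cc hprev hedge ih =>
      by_cases hcb : cc = Sum.inr (v, j)
      · rw [hcb, hφvj]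
        exact hvi_reach'
      · have hmem' : ((φ b, φ cc) : AuxV V × AuxV V) ∈ R' :=
          Finset.mem_image_of_mem _ (Finset.mem_filter.mpr ⟨hedge, hcb⟩)
        exact ih.tail hmem'
  -- all terminals are reachable in R'
  have hterm' : ∀ t ∈ auxTerminals S, Reaches R' (Sum.inl r) t := by
    intro t ht
    obtain ⟨w, _, rfl⟩ := Finset.mem_image.mp ht
    have := hF5 _ (hterm _ ht)
    rwa [hφ, shiftMap_inl] at this
  have hnr' : ∀ e ∈ R', e.2 ≠ Sum.inl r := fun e he => haux_head e (hR'sub he)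
  -- an incoming edge of v^j, of positive cost
  have hej : ∃ e ∈ R, e.2 = Sum.inr (v, j) := by
    rcases hj with ⟨e, he, h | h⟩
    · have hre := htails e he
      rw [h] at hre
      rcases Relation.ReflTransGen.cases_tail hre with h' | ⟨z, _, hz⟩
      · exact absurd h' (by simp)
      · exact ⟨(z, Sum.inr (v, j)), hz, rfl⟩
    · exact ⟨e, he, h⟩
  obtain ⟨ej, hejR, hej2⟩ := hej
  have hcostej : 0 < auxCost c ej := by
    rcases mem_auxEdges_iff.mp (hsubE hejR) with
      ⟨u, w, k, hE, _, _, _, _, _, heq⟩ | ⟨w, hE, _, _, heq⟩ | ⟨w, k, _, _, _, _, heq⟩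
    · subst heq; simpa [auxCost] using hc _ hE
    · subst heq; simpa [auxCost] using hc _ hE
    · subst heq; exact absurd hej2 (by simp)
  -- the cost strictly decreases
  have hc1 : treeCost (auxCost c) R' ≤
      treeCost (auxCost c) (R.filter fun e => e.2 ≠ Sum.inr (v, j)) := by
    rw [hR']
    unfold treeCost
    calc ∑ x ∈ (R.filter fun e => e.2 ≠ Sum.inr (v, j)).image (fun e => (φ e.1, φ e.2)),
          auxCost c x
        ≤ ∑ e ∈ R.filter fun e => e.2 ≠ Sum.inr (v, j), auxCost c (φ e.1, φ e.2) :=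
          sum_image_le_nat _ _ _
      _ = ∑ e ∈ R.filter fun e => e.2 ≠ Sum.inr (v, j), auxCost c e :=
          Finset.sum_congr rfl fun e _ => hφcost e
  have hc2 : treeCost (auxCost c) (R.filter fun e => e.2 ≠ Sum.inr (v, j)) <
      treeCost (auxCost c) R := by
    unfold treeCost
    refine Finset.sum_lt_sum_of_subset (Finset.filter_subset _ _) hejR ?_ hcostej
      fun _ _ _ => Nat.zero_le _
    simp [hej2]
  -- prune R' into a Steiner tree and contradict minimality
  obtain ⟨R'', hsub'', htree'', hcost''⟩ :=
    prune (auxCost c) R' (Sum.inl r) (auxTerminals S) hnr' hterm'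
  have hminR := hmin R'' (fun e he => hR'sub (hsub'' he)) htree''
  omega
end

section
/- Let H be the layered auxiliary graph constructed from G with delay bound D (with D copies v^1,…,v^D of each non-root vertex v, edges (v_j^i, v_l^{i+d(e)}) of cost c(e) for each edge e=(v_j,v_l) of G and each feasible layer i, edges (r, v_l^{d(e)}) of cost c(e) for edges incident to r, and an extra terminal copy of each terminal of S∖{r} joined by cost-0 edges from all of its D layer copies), and let S_H be its terminal set. If R is a minimum-cost directed Steiner tree rooted at r spanning S_H in H with total cost C, then the subgraph R' of G consisting of all edges (v_j, v_l) such that some edge (v_j^{i_j}, v_l^{i_l}) belongs to R is a Steiner tree of G spanning S with total cost C, in which the delay of the path from r to every terminal of S is at most D. -/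
open Sum Relation Finset

section Helpers

variable {V : Type*} [DecidableEq V] {E : Finset (V × V)} {S : Finset V} {r : V}
  {c d : V × V → ℕ} {D : ℕ} {R : Finset (AuxV V × AuxV V)}

lemma mem_auxEdges_cases {e : AuxV V × AuxV V}
    (he : e ∈ auxEdges E d S r D) :
    (∃ a p b, e = (inr (a,p), inr (b, p + d (a,b))) ∧ (a,b) ∈ E ∧ a ≠ r ∧ b ≠ r ∧
        1 ≤ p ∧ p + d (a,b) ≤ D) ∨
    (∃ b, e = (inl r, inr (b, d (r,b))) ∧ (r,b) ∈ E ∧ b ≠ r ∧ d (r,b) ≤ D) ∨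
    (∃ a p, e = (inr (a,p), inl a) ∧ a ∈ S.erase r ∧ 1 ≤ p ∧ p ≤ D) := by
  simp only [auxEdges, Finset.mem_union, Finset.mem_image, Finset.mem_filter,
    Finset.mem_product, Finset.mem_Icc] at he
  rcases he with (⟨⟨⟨a,b⟩,p⟩, ⟨⟨⟨hE, ha, hb⟩, h1, hD⟩, hle⟩, rfl⟩ |
      ⟨⟨a,b⟩, ⟨hE, ha, hb, hle⟩, rfl⟩) | ⟨⟨a,p⟩, ⟨hS, h1, hD⟩, rfl⟩
  · exact Or.inl ⟨a, p, b, rfl, hE, ha, hb, h1, hle⟩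
  · subst ha; exact Or.inr (Or.inl ⟨b, rfl, hE, hb, hle⟩)
  · exact Or.inr (Or.inr ⟨a, p, rfl, hS, h1, hD⟩)

lemma mem_auxEdges_layer {a b : V} {p : ℕ} (hE : (a,b) ∈ E) (ha : a ≠ r) (hb : b ≠ r)
    (h1 : 1 ≤ p) (hDp : p + d (a,b) ≤ D) :
    ((inr (a,p), inr (b, p + d (a,b))) : AuxV V × AuxV V) ∈ auxEdges E d S r D := by
  refine Finset.mem_union.mpr (Or.inl (Finset.mem_union.mpr (Or.inl ?_)))
  refine Finset.mem_image.mpr ⟨((a,b), p), ?_, rfl⟩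
  simp only [Finset.mem_filter, Finset.mem_product, Finset.mem_Icc]
  exact ⟨⟨⟨hE, ha, hb⟩, h1, by omega⟩, hDp⟩

lemma mem_auxEdges_root {b : V} (hE : (r,b) ∈ E) (hb : b ≠ r) (hDp : d (r,b) ≤ D) :
    ((inl r, inr (b, d (r,b))) : AuxV V × AuxV V) ∈ auxEdges E d S r D := by
  refine Finset.mem_union.mpr (Or.inl (Finset.mem_union.mpr (Or.inr ?_)))
  exact Finset.mem_image.mpr ⟨(r,b), Finset.mem_filter.mpr ⟨hE, rfl, hb, hDp⟩, rfl⟩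

lemma mem_auxEdges_term {a : V} {p : ℕ} (hS : a ∈ S.erase r) (h1 : 1 ≤ p) (hDp : p ≤ D) :
    ((inr (a,p), inl a) : AuxV V × AuxV V) ∈ auxEdges E d S r D := by
  refine Finset.mem_union.mpr (Or.inr ?_)
  refine Finset.mem_image.mpr ⟨(a, p), ?_, rfl⟩
  simp only [Finset.mem_product, Finset.mem_Icc]
  exact ⟨hS, h1, hDp⟩

lemma head_ne_root {e : AuxV V × AuxV V} (he : e ∈ auxEdges E d S r D) :
    e.2 ≠ inl r := by
  rcases mem_auxEdges_cases he with ⟨a,p,b,rfl,_⟩ | ⟨b,rfl,_⟩ | ⟨a,p,rfl,hS,_⟩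
  · simp
  · simp
  · simpa using (Finset.ne_of_mem_erase hS)

lemma mem_projTree_inr {a b : V} {i j : ℕ}
    (h : ((inr (a,i), inr (b,j)) : AuxV V × AuxV V) ∈ R) :
    (a,b) ∈ projTree R :=
  Finset.mem_biUnion.mpr ⟨_, h, Finset.mem_singleton_self _⟩

lemma mem_projTree_inl {a b : V} {j : ℕ}
    (h : ((inl a, inr (b,j)) : AuxV V × AuxV V) ∈ R) :
    (a,b) ∈ projTree R :=
  Finset.mem_biUnion.mpr ⟨_, h, Finset.mem_singleton_self _⟩

lemma exists_of_mem_projTree {ab : V × V} (h : ab ∈ projTree R) :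
    ∃ e ∈ R, (∃ j, e.2 = inr (ab.2, j)) ∧
      ((∃ i, e.1 = inr (ab.1, i)) ∨ e.1 = inl ab.1) := by
  obtain ⟨e, he, hm⟩ := Finset.mem_biUnion.mp h
  rcases e with ⟨x | ⟨a', i⟩, y | ⟨b', jj⟩⟩
  · simp at hm
  · obtain rfl := Finset.mem_singleton.mp hm
    exact ⟨_, he, ⟨jj, rfl⟩, Or.inr rfl⟩
  · simp at hm
  · obtain rfl := Finset.mem_singleton.mp hm
    exact ⟨_, he, ⟨jj, rfl⟩, Or.inl ⟨i, rfl⟩⟩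

/-- the projection map to `V`. -/
def auxProj : AuxV V → V := Sum.elim id Prod.fst

lemma reaches_proj (hsub : R ⊆ auxEdges E d S r D) {x y : AuxV V}
    (h : Reaches R x y) : Reaches (projTree R) (auxProj x) (auxProj y) := by
  refine Relation.ReflTransGen.lift' auxProj ?_ _ _ h
  intro p q hpq
  rcases mem_auxEdges_cases (hsub hpq) with ⟨a,p',b,heq,_⟩ | ⟨b,heq,_⟩ | ⟨a,p',heq,_⟩ <;>
    obtain ⟨rfl, rfl⟩ := Prod.mk.inj heq
  · exact Relation.ReflTransGen.single (mem_projTree_inr hpq)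
  · exact Relation.ReflTransGen.single (mem_projTree_inl hpq)
  · exact Relation.ReflTransGen.refl

lemma head_inr_shape (hd : ∀ e ∈ E, 0 < d e) (hsub : R ⊆ auxEdges E d S r D)
    {e : AuxV V × AuxV V} (he : e ∈ R) {b : V} {k : ℕ} (hh : e.2 = inr (b,k)) :
    b ≠ r ∧ 1 ≤ k ∧ k ≤ D := by
  rcases mem_auxEdges_cases (hsub he) with ⟨a,p,b2,heq,hE,ha,hb,h1,h2⟩ |
      ⟨b2,heq,hE,hb,h2⟩ | ⟨a,p,heq,hS,h1,h2⟩ <;> rw [heq] at hh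
  · obtain ⟨rfl, rfl⟩ : b2 = b ∧ p + d (a, b2) = k := by simpa using hh
    exact ⟨hb, by omega, h2⟩
  · obtain ⟨rfl, rfl⟩ : b2 = b ∧ d (r, b2) = k := by simpa using hh
    exact ⟨hb, hd _ hE, h2⟩
  · simp at hh

end Helpers

section Helpers2

variable {V : Type*} [DecidableEq V] {E : Finset (V × V)} {S : Finset V} {r : V}
  {c d : V × V → ℕ} {D : ℕ} {R : Finset (AuxV V × AuxV V)}

lemma reach_delay (hd : ∀ e ∈ E, 0 < d e) (hsub : R ⊆ auxEdges E d S r D)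
    {x : AuxV V} (h : Reaches R (inl r) x) :
    x = inl r ∨
    (∃ b p, x = inr (b,p) ∧ b ≠ r ∧ 1 ≤ p ∧ p ≤ D ∧ DelayReaches (projTree R) d r b p) ∨
    (∃ t, x = inl t ∧ t ≠ r ∧ ∃ p, 1 ≤ p ∧ p ≤ D ∧ DelayReaches (projTree R) d r t p) := by
  induction h with
  | refl => exact Or.inl rfl
  | @tail b x hab hbc ih =>
    rcases mem_auxEdges_cases (hsub hbc) with ⟨a,p',b2,heq,hE,ha,hb,h1,h2⟩ |
        ⟨b2,heq,hE,hb,h2⟩ | ⟨a,p',heq,hS,h1,h2⟩ <;>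
      obtain ⟨rfl, rfl⟩ := Prod.mk.inj heq
    · -- layer edge
      rcases ih with h0 | ⟨b1, p1, heq1, hne, hp1, hp2, hDR⟩ | ⟨t, heq1, _⟩
      · simp at h0
      · obtain ⟨rfl, rfl⟩ : b1 = a ∧ p1 = p' := by simpa using heq1.symm
        refine Or.inr (Or.inl ⟨b2, _, rfl, hb, by omega, h2, ?_⟩)
        exact hDR.tail ⟨mem_projTree_inr hbc, rfl⟩
      · simp at heq1
    · -- root edge
      rcases ih with h0 | ⟨b1, p1, heq1, _⟩ | ⟨t, heq1, hne, _⟩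
      · refine Or.inr (Or.inl ⟨b2, _, rfl, hb, hd _ hE, h2, ?_⟩)
        refine Relation.ReflTransGen.single ⟨mem_projTree_inl hbc, (zero_add _).symm⟩
      · simp at heq1
      · exact absurd (by simpa using heq1 : r = t).symm hne
    · -- terminal edge
      rcases ih with h0 | ⟨b1, p1, heq1, hne, hp1, hp2, hDR⟩ | ⟨t, heq1, _⟩
      · simp at h0
      · obtain ⟨rfl, rfl⟩ : b1 = a ∧ p1 = p' := by simpa using heq1.symm
        exact Or.inr (Or.inr ⟨b1, rfl, Finset.ne_of_mem_erase hS, p1, hp1, hp2, hDR⟩)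
      · simp at heq1

lemma reach_layer_mono (hsub : R ⊆ auxEdges E d S r D) {a : V} {p : ℕ} {x : AuxV V}
    (h : Reaches R (inr (a,p)) x) :
    (∃ b q, x = inr (b,q) ∧ p ≤ q) ∨ (∃ t, x = inl t ∧ t ≠ r) := by
  induction h with
  | refl => exact Or.inl ⟨a, p, rfl, le_rfl⟩
  | @tail b x hab hbc ih =>
    rcases mem_auxEdges_cases (hsub hbc) with ⟨a1,p1,b2,heq,hE,ha,hb,h1,h2⟩ |
        ⟨b2,heq,hE,hb,h2⟩ | ⟨a1,p1,heq,hS,h1,h2⟩ <;>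
      obtain ⟨rfl, rfl⟩ := Prod.mk.inj heq
    · rcases ih with ⟨b1, q, heq1, hq⟩ | ⟨t, heq1, hne⟩
      · obtain ⟨rfl, rfl⟩ : b1 = a1 ∧ q = p1 := by simpa using heq1.symm
        exact Or.inl ⟨b2, _, rfl, by omega⟩
      · simp at heq1
    · rcases ih with ⟨b1, q, heq1, hq⟩ | ⟨t, heq1, hne⟩
      · simp at heq1
      · exact absurd (by simpa using heq1 : r = t).symm hne
    · rcases ih with ⟨b1, q, heq1, hq⟩ | ⟨t, heq1, hne⟩
      · exact Or.inr ⟨a1, rfl, Finset.ne_of_mem_erase hS⟩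
      · simp at heq1

lemma nat_sum_union_le {α : Type*} [DecidableEq α] (s t : Finset α) (f : α → ℕ) :
    ∑ x ∈ s ∪ t, f x ≤ ∑ x ∈ s, f x + ∑ x ∈ t, f x := by
  have h := Finset.sum_union_inter (s₁ := s) (s₂ := t) (f := f)
  omega

lemma nat_sum_image_le {α γ : Type*} [DecidableEq α] (s : Finset γ) (g : γ → α)
    (f : α → ℕ) : ∑ x ∈ s.image g, f x ≤ ∑ x ∈ s, f (g x) := by
  rw [Finset.sum_comp f g]
  refine Finset.sum_le_sum fun b hb => ?_
  obtain ⟨x, hx, rfl⟩ := Finset.mem_image.mp hb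
  have hcard : 0 < (s.filter fun a => g a = g x).card :=
    Finset.card_pos.mpr ⟨x, Finset.mem_filter.mpr ⟨hx, rfl⟩⟩
  calc f (g x) = 1 * f (g x) := (one_mul _).symm
    _ ≤ (s.filter fun a => g a = g x).card * f (g x) :=
        Nat.mul_le_mul_right _ hcard
    _ = (s.filter fun a => g a = g x).card • f (g x) := (smul_eq_mul ..).symm

end Helpers2

section Key

variable {V : Type*} [DecidableEq V] {E : Finset (V × V)} {S : Finset V} {r : V}
  {c d : V × V → ℕ} {D : ℕ} {R : Finset (AuxV V × AuxV V)}

lemma no_dup (hc : ∀ e ∈ E, 0 < c e) (hd : ∀ e ∈ E, 0 < d e)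
    (hmin : IsMinDirSteinerTree (auxCost c) (auxEdges E d S r D) R
      (Sum.inl r) (auxTerminals S)) :
    ∀ (v : V) (i j : ℕ) (e f : AuxV V × AuxV V), e ∈ R → f ∈ R →
      e.2 = inr (v,i) → f.2 = inr (v,j) → i = j := by
  classical
  obtain ⟨hsub, ⟨hroot, hdeg, htail, hterm⟩, hopt⟩ := hmin
  have hUniq : ∀ e ∈ R, ∀ f ∈ R, e.2 = f.2 → e = f := by
    intro e he f hf h2
    exact Finset.card_le_one.mp (hdeg e.2) e (Finset.mem_filter.mpr ⟨he, rfl⟩)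
      f (Finset.mem_filter.mpr ⟨hf, h2.symm⟩)
  by_contra hcon
  push_neg at hcon
  obtain ⟨v0, i0, j0, e0, f0, he0, hf0, he02, hf02, hij0⟩ := hcon
  -- the duplication predicate
  set P : ℕ → Prop := fun q => ∃ v i, i < q ∧ (∃ e ∈ R, e.2 = inr (v, i)) ∧
    (∃ e ∈ R, e.2 = inr (v, q)) with hPdef
  have hPex : ∃ q ≤ D, P q := by
    rcases Nat.lt_or_ge i0 j0 with h | h
    · exact ⟨j0, (head_inr_shape hd hsub hf0 hf02).2.2,
        v0, i0, h, ⟨e0, he0, he02⟩, ⟨f0, hf0, hf02⟩⟩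
    · have h' : j0 < i0 := lt_of_le_of_ne h (Ne.symm hij0)
      exact ⟨i0, (head_inr_shape hd hsub he0 he02).2.2,
        v0, j0, h', ⟨f0, hf0, hf02⟩, ⟨e0, he0, he02⟩⟩
  obtain ⟨q0, hq0D, hPq0⟩ := hPex
  set j := Nat.findGreatest P D with hjdef
  have hPj : P j := Nat.findGreatest_spec hq0D hPq0
  have hmax : ∀ q, q ≤ D → P q → q ≤ j := fun q hq hPq => Nat.le_findGreatest hq hPq
  obtain ⟨v, i, hij, ⟨ei, hei, hei2⟩, ⟨ej, hej, hej2⟩⟩ := hPj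
  have hi_sh := head_inr_shape hd hsub hei hei2
  have hj_sh := head_inr_shape hd hsub hej hej2
  -- the subtree below v^j
  set InB : AuxV V → Prop := fun x => Reaches R (inr (v,j)) x with hInBdef
  have hInB_step : ∀ {x y : AuxV V}, InB x → (x,y) ∈ R → InB y :=
    fun hx hxy => hx.tail hxy
  have hInB_closed : ∀ e ∈ R, InB e.1 → InB e.2 := by
    intro e he h1
    exact hInB_step h1 (by rwa [Prod.mk.eta])
  have hnInB_inl : ∀ t, InB (inl t) → t ≠ r := by
    intro t h
    rcases reach_layer_mono hsub h with ⟨b, q, heq, _⟩ | ⟨t', heq, hne⟩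
    · simp at heq
    · obtain rfl : t = t' := by simpa using heq
      exact hne
  have hInB_inr : ∀ b q, InB (inr (b,q)) → j ≤ q := by
    intro b q h
    rcases reach_layer_mono hsub h with ⟨b', q', heq, hle⟩ | ⟨t', heq, hne⟩
    · obtain ⟨rfl, rfl⟩ : b' = b ∧ q' = q := by simpa using heq.symm
      exact hle
    · simp at heq
  have hInB_root : ¬ InB (inl r) := fun h => hnInB_inl r h rfl
  -- heads of edges with tail in B
  have hsrc_head : ∀ e ∈ R, InB e.1 →
      (∃ b q, e.2 = inr (b,q) ∧ j < q ∧ q ≤ D) ∨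
      (∃ a p, e = (inr (a,p), inl a) ∧ a ∈ S.erase r ∧ 1 ≤ p ∧ j ≤ p ∧ p ≤ D) := by
    intro e he h1
    rcases mem_auxEdges_cases (hsub he) with ⟨a,p,b2,heq,hE,ha,hb,h1',h2⟩ |
        ⟨b2,heq,hE,hb,h2⟩ | ⟨a,p,heq,hS,h1',h2⟩
    · rw [heq] at h1 ⊢
      have hp : j ≤ p := hInB_inr a p h1
      have := hd _ hE
      exact Or.inl ⟨b2, p + d (a, b2), rfl, by omega, h2⟩
    · rw [heq] at h1; exact absurd h1 hInB_root
    · rw [heq] at h1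
      exact Or.inr ⟨a, p, heq, hS, h1', hInB_inr a p h1, h2⟩
  -- the removed edge ej
  have hejInB2 : InB ej.2 := by rw [hej2]; exact Relation.ReflTransGen.refl
  have hejtail : ¬ InB ej.1 := by
    intro h1
    rcases hsrc_head ej hej h1 with ⟨b, q, heq, hlt, _⟩ | ⟨a, p, heq, _⟩
    · rw [hej2] at heq
      obtain ⟨_, rfl⟩ : v = b ∧ j = q := by simpa using heq
      omega
    · rw [heq] at hej2; simp at hej2
  have hejc : 0 < auxCost c ej := by
    rcases mem_auxEdges_cases (hsub hej) with ⟨a,p,b2,heq,hE,ha,hb,h1',h2⟩ |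
        ⟨b2,heq,hE,hb,h2⟩ | ⟨a,p,heq,hS,h1',h2⟩
    · rw [heq]; exact hc _ hE
    · rw [heq]; exact hc _ hE
    · rw [heq] at hej2; simp at hej2
  -- the shift map
  set shf : AuxV V → AuxV V := Sum.elim inl (fun aq => inr (aq.1, aq.2 - (j - i)))
    with hshfdef
  have hshf_inr : ∀ (a : V) (q : ℕ), shf (inr (a,q)) = inr (a, q - (j - i)) :=
    fun a q => rfl
  have hshf_inl : ∀ (a : V), shf (inl a) = inl a := fun a => rfl
  set R' : Finset (AuxV V × AuxV V) :=
    R.filter (fun e => ¬ InB e.1 ∧ ¬ InB e.2) ∪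
      (R.filter fun e => InB e.1).image (fun e => (shf e.1, shf e.2)) with hR'def
  have hmemR' : ∀ e', e' ∈ R' ↔ ((e' ∈ R ∧ ¬ InB e'.1 ∧ ¬ InB e'.2) ∨
      (∃ e ∈ R, InB e.1 ∧ (shf e.1, shf e.2) = e')) := by
    intro e'
    simp only [hR'def, Finset.mem_union, Finset.mem_filter, Finset.mem_image]
    constructor
    · rintro (⟨h1, h2, h3⟩ | ⟨e, ⟨he, h1⟩, heq⟩)
      · exact Or.inl ⟨h1, h2, h3⟩
      · exact Or.inr ⟨e, he, h1, heq⟩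
    · rintro (⟨h1, h2, h3⟩ | ⟨e, he, h1, heq⟩)
      · exact Or.inl ⟨h1, h2, h3⟩
      · exact Or.inr ⟨e, ⟨he, h1⟩, heq⟩
  -- R' is a subset of the aux edges
  have hshift_mem : ∀ e ∈ R, InB e.1 → (shf e.1, shf e.2) ∈ auxEdges E d S r D := by
    intro e he h1
    rcases mem_auxEdges_cases (hsub he) with ⟨a,p,b2,heq,hE,ha,hb,h1',h2⟩ |
        ⟨b2,heq,hE,hb,h2⟩ | ⟨a,p,heq,hS,h1',h2⟩ <;> rw [heq] at h1 ⊢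
    · have hp : j ≤ p := hInB_inr a p h1
      have harith : p + d (a,b2) - (j - i) = (p - (j - i)) + d (a,b2) := by omega
      rw [hshf_inr, hshf_inr, harith]
      exact mem_auxEdges_layer hE ha hb (by omega) (by omega)
    · exact absurd h1 hInB_root
    · have hp : j ≤ p := hInB_inr a p h1
      rw [hshf_inr, hshf_inl]
      exact mem_auxEdges_term hS (by omega) (by omega)
  have hR'sub : R' ⊆ auxEdges E d S r D := by
    intro e' he'
    rcases (hmemR' e').mp he' with ⟨h1, _, _⟩ | ⟨e, he, h1, heq⟩
    · exact hsub h1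
    · rw [← heq]; exact hshift_mem e he h1
  -- in-degree of R' is at most one
  have hdeg' : ∀ z : AuxV V, ((R'.filter fun e => e.2 = z).card ≤ 1) := by
    intro z
    rw [Finset.card_le_one]
    intro a ha b hb
    obtain ⟨haR', ha2⟩ := Finset.mem_filter.mp ha
    obtain ⟨hbR', hb2⟩ := Finset.mem_filter.mp hb
    have hab2 : a.2 = b.2 := ha2.trans hb2.symm
    clear ha hb ha2 hb2
    rcases (hmemR' a).mp haR' with ⟨haR, ha1, haI⟩ | ⟨e, he, he1, heq⟩ <;>
      rcases (hmemR' b).mp hbR' with ⟨hbR, hb1, hbI⟩ | ⟨f, hf, hf1, hfq⟩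
    · exact hUniq a haR b hbR hab2
    · -- a in part1, b shifted from f
      exfalso
      rcases hsrc_head f hf hf1 with ⟨bb, q, hfh, hlt, hqD⟩ | ⟨aa, p, hfe, hfS, hp1, hpj, hpD⟩
      · have hb2' : b.2 = inr (bb, q - (j - i)) := by
          rw [← hfq]
          show shf f.2 = _
          rw [hfh, hshf_inr]
        have hPq : P q := ⟨bb, q - (j - i), by omega, ⟨a, haR, by rw [hab2, hb2']⟩,
          ⟨f, hf, hfh⟩⟩
        exact absurd (hmax q hqD hPq) (by omega)
      · have hfI : InB f.2 := hInB_closed f hf hf1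
        have hb2' : b.2 = inl aa := by
          rw [← hfq]
          show shf f.2 = _
          rw [hfe]
          exact hshf_inl aa
        rw [hfe] at hfI
        apply haI
        rw [hab2, hb2']
        exact hfI
    · -- b in part1, a shifted from e
      exfalso
      rcases hsrc_head e he he1 with ⟨bb, q, heh, hlt, hqD⟩ | ⟨aa, p, hee, heS, hp1, hpj, hpD⟩
      · have ha2' : a.2 = inr (bb, q - (j - i)) := by
          rw [← heq]
          show shf e.2 = _
          rw [heh, hshf_inr]
        have hPq : P q := ⟨bb, q - (j - i), by omega, ⟨b, hbR, by rw [← hab2, ha2']⟩,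
          ⟨e, he, heh⟩⟩
        exact absurd (hmax q hqD hPq) (by omega)
      · have heI : InB e.2 := hInB_closed e he he1
        have ha2' : a.2 = inl aa := by
          rw [← heq]
          show shf e.2 = _
          rw [hee]
          exact hshf_inl aa
        rw [hee] at heI
        apply hbI
        rw [← hab2, ha2']
        exact heI
    · -- both shifted
      have hef2 : shf e.2 = shf f.2 := by
        have h1 : (shf e.1, shf e.2).2 = (shf f.1, shf f.2).2 := by
          rw [heq, hfq, hab2]
        exact h1
      have he2f2 : e.2 = f.2 := by
        rcases hsrc_head e he he1 with ⟨b1, q1, heh, hlt1, hq1D⟩ | ⟨a1, p1, hee, _⟩ <;>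
          rcases hsrc_head f hf hf1 with ⟨b2, q2, hfh, hlt2, hq2D⟩ | ⟨a2, p2, hfe, _⟩
        · rw [heh, hfh] at hef2 ⊢
          rw [hshf_inr, hshf_inr] at hef2
          obtain ⟨rfl, hq⟩ : b1 = b2 ∧ q1 - (j - i) = q2 - (j - i) := by
            simpa using hef2
          have : q1 = q2 := by omega
          rw [this]
        · exfalso
          have hf2 : f.2 = inl a2 := by rw [hfe]
          rw [heh, hf2, hshf_inr, hshf_inl] at hef2
          simp at hef2
        · exfalso
          have he2 : e.2 = inl a1 := by rw [hee]
          rw [he2, hfh, hshf_inl, hshf_inr] at hef2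
          simp at hef2
        · have he2 : e.2 = inl a1 := by rw [hee]
          have hf2 : f.2 = inl a2 := by rw [hfe]
          rw [he2, hf2, hshf_inl, hshf_inl] at hef2
          obtain rfl : a1 = a2 := by simpa using hef2
          rw [he2, hf2]
      have : e = f := hUniq e he f hf he2f2
      rw [← heq, ← hfq, this]
  -- reachability in R'
  have lemA : ∀ x, Reaches R (inl r) x → ¬ InB x → Reaches R' (inl r) x := by
    intro x hx
    induction hx with
    | refl => intro _; exact Relation.ReflTransGen.refl
    | @tail b x hab hbc ih =>
      intro hx
      have hb : ¬ InB b := fun h => hx (hInB_step h hbc)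
      refine (ih hb).tail ?_
      exact Finset.mem_union_left _ (Finset.mem_filter.mpr ⟨hbc, hb, hx⟩)
  have hRvi : Reaches R (inl r) (inr (v, i)) := by
    have h1 : (ei.1, ei.2) ∈ R := by rw [Prod.mk.eta]; exact hei
    rw [hei2] at h1
    exact (htail ei hei).tail h1
  have hnInBvi : ¬ InB (inr (v, i)) := fun h => by
    have := hInB_inr v i h; omega
  have hvi' : Reaches R' (inl r) (inr (v, i)) := lemA _ hRvi hnInBvi
  have lemB : ∀ x, InB x → Reaches R' (inl r) (shf x) := by
    intro x hx
    induction hx with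
    | refl =>
      rw [hshf_inr]
      have : j - (j - i) = i := by omega
      rw [this]
      exact hvi'
    | @tail b x hab hbc ih =>
      refine ih.tail ?_
      refine Finset.mem_union_right _ (Finset.mem_image.mpr ⟨(b, x), ?_, rfl⟩)
      exact Finset.mem_filter.mpr ⟨hbc, hab⟩
  have htail' : ∀ e ∈ R', Reaches R' (inl r) e.1 := by
    intro e' he'
    rcases (hmemR' e').mp he' with ⟨h1, h2, _⟩ | ⟨e, he, h1, heq⟩
    · exact lemA _ (htail e' h1) h2
    · have : e'.1 = shf e.1 := by rw [← heq]
      rw [this]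
      exact lemB e.1 h1
  have hterm' : ∀ t ∈ auxTerminals S, Reaches R' (inl r) t := by
    intro t ht
    obtain ⟨s, hs, rfl⟩ := Finset.mem_image.mp ht
    by_cases hB : InB (inl s)
    · have := lemB _ hB
      rwa [hshf_inl] at this
    · exact lemA _ (hterm _ ht) hB
  have hroot' : ∀ e ∈ R', e.2 ≠ inl r := fun e he => head_ne_root (hR'sub he)
  have hR'tree : IsDirSteinerTree R' (Sum.inl r) (auxTerminals S) :=
    ⟨hroot', hdeg', htail', hterm'⟩
  -- cost comparison
  have hshift_cost : ∀ e : AuxV V × AuxV V, auxCost c (shf e.1, shf e.2) = auxCost c e := by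
    rintro ⟨x | ⟨a,p⟩, y | ⟨b,q⟩⟩ <;> rfl
  have hsplit1 : ∑ e ∈ R, auxCost c e =
      ∑ e ∈ R.filter (fun e => InB e.1), auxCost c e +
      ∑ e ∈ R.filter (fun e => ¬ InB e.1), auxCost c e :=
    (Finset.sum_filter_add_sum_filter_not R _ _).symm
  have hsplit2 : ∑ e ∈ R.filter (fun e => ¬ InB e.1), auxCost c e =
      ∑ e ∈ R.filter (fun e => ¬ InB e.1 ∧ InB e.2), auxCost c e +
      ∑ e ∈ R.filter (fun e => ¬ InB e.1 ∧ ¬ InB e.2), auxCost c e := by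
    rw [← Finset.sum_filter_add_sum_filter_not (R.filter (fun e => ¬ InB e.1))
      (fun e => InB e.2), Finset.filter_filter, Finset.filter_filter]
  have hejmem : ej ∈ R.filter (fun e => ¬ InB e.1 ∧ InB e.2) :=
    Finset.mem_filter.mpr ⟨hej, hejtail, hejInB2⟩
  have hCge : auxCost c ej ≤ ∑ e ∈ R.filter (fun e => ¬ InB e.1 ∧ InB e.2),
      auxCost c e :=
    Finset.single_le_sum (fun x _ => Nat.zero_le _) hejmem
  have hR'le : treeCost (auxCost c) R' ≤
      ∑ e ∈ R.filter (fun e => ¬ InB e.1 ∧ ¬ InB e.2), auxCost c e +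
      ∑ e ∈ R.filter (fun e => InB e.1), auxCost c e := by
    refine le_trans (nat_sum_union_le _ _ _) ?_
    refine Nat.add_le_add le_rfl ?_
    refine le_trans (nat_sum_image_le _ _ _) ?_
    exact le_of_eq (Finset.sum_congr rfl fun e _ => hshift_cost e)
  have hlt : treeCost (auxCost c) R' < treeCost (auxCost c) R := by
    have hcost : treeCost (auxCost c) R = ∑ e ∈ R, auxCost c e := rfl
    omega
  exact absurd (hopt R' hR'sub hR'tree) (by omega)

end Key

/-- first direction of Theorem 2 of the paper.
If `R` is a minimum-cost directed Steiner tree rooted at `r` spanning `S_H`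
in the layered auxiliary graph `H`, with total cost `C`, then the subgraph
`R'` of `G` consisting of all edges `(v_j, v_l)` some copy of which belongs
to `R` (i.e. `projTree R`) is a Steiner tree of `G` spanning `S`, rooted at
`r`, of the same total cost `C`, in which the delay of the tree path from
`r` to every terminal of `S` is at most `D`. -/
theorem min_aux_steiner_tree_projects
    {V : Type*} [Fintype V] [DecidableEq V]
    (E : Finset (V × V)) (S : Finset V) (r : V) (hr : r ∈ S)
    (c : V × V → ℕ) (d : V × V → ℕ)
    (hc : ∀ e ∈ E, 0 < c e) (hd : ∀ e ∈ E, 0 < d e)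
    (D : ℕ) (hD : 0 < D)
    (R : Finset (AuxV V × AuxV V)) (C : ℕ)
    (hR : IsMinDirSteinerTree (auxCost c) (auxEdges E d S r D) R
      (Sum.inl r) (auxTerminals S))
    (hC : treeCost (auxCost c) R = C) :
    projTree R ⊆ E ∧
    IsDirSteinerTree (projTree R) r S ∧
    treeCost c (projTree R) = C ∧
    ∀ t ∈ S, ∃ k ≤ D, DelayReaches (projTree R) d r t k := by
  classical
  have hdup := no_dup hc hd hR
  obtain ⟨hsub, ⟨hroot, hdeg, htail, hterm⟩, hopt⟩ := hR
  have hUniq : ∀ e ∈ R, ∀ f ∈ R, e.2 = f.2 → e = f := by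
    intro e he f hf h2
    exact Finset.card_le_one.mp (hdeg e.2) e (Finset.mem_filter.mpr ⟨he, rfl⟩)
      f (Finset.mem_filter.mpr ⟨hf, h2.symm⟩)
  -- Part 1: the projection is a subgraph of G
  have hsubE : projTree R ⊆ E := by
    intro ab hab
    obtain ⟨e, he, ⟨jj, hh⟩, htl⟩ := exists_of_mem_projTree hab
    rcases mem_auxEdges_cases (hsub he) with ⟨a,p,b,heq,hE,_⟩ | ⟨b,heq,hE,_⟩ |
        ⟨a,p,heq,_⟩
    · have hb2 : ab.2 = b := by
        rw [heq] at hh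
        exact ((by simpa using hh.symm : ab.2 = b ∧ jj = p + d (a,b))).1
      have ha1 : ab.1 = a := by
        rcases htl with ⟨ii, h⟩ | h <;> rw [heq] at h
        · exact ((by simpa using h.symm : ab.1 = a ∧ ii = p)).1
        · simp at h
      have : ab = (a, b) := Prod.ext ha1 hb2
      rw [this]; exact hE
    · have hb2 : ab.2 = b := by
        rw [heq] at hh
        exact ((by simpa using hh.symm : ab.2 = b ∧ jj = d (r,b))).1
      have ha1 : ab.1 = r := by
        rcases htl with ⟨ii, h⟩ | h <;> rw [heq] at h
        · simp at h
        · exact (by simpa using h.symm : ab.1 = r)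
      have : ab = (r, b) := Prod.ext ha1 hb2
      rw [this]; exact hE
    · rw [heq] at hh; simp at hh
  -- Part 2: tree conditions
  have hroot2 : ∀ e ∈ projTree R, e.2 ≠ r := by
    intro ab hab
    obtain ⟨e, he, ⟨jj, hh⟩, _⟩ := exists_of_mem_projTree hab
    exact (head_inr_shape hd hsub he hh).1
  have hdeg2 : ∀ w : V, ((projTree R).filter fun e => e.2 = w).card ≤ 1 := by
    intro w
    rw [Finset.card_le_one]
    intro x hx y hy
    obtain ⟨hx1, hx2⟩ := Finset.mem_filter.mp hx
    obtain ⟨hy1, hy2⟩ := Finset.mem_filter.mp hy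
    have hxy2 : x.2 = y.2 := hx2.trans hy2.symm
    obtain ⟨e, he, ⟨j1, he2⟩, hetl⟩ := exists_of_mem_projTree hx1
    obtain ⟨f, hf, ⟨j2, hf2⟩, hftl⟩ := exists_of_mem_projTree hy1
    have hj : j1 = j2 := hdup x.2 j1 j2 e f he hf he2 (by rw [hf2, hxy2])
    have hef : e = f := hUniq e he f hf (by rw [he2, hf2, hxy2, hj])
    have h1 : x.1 = y.1 := by
      rcases hetl with ⟨i1, h⟩ | h <;> rcases hftl with ⟨i2, h'⟩ | h' <;>
        rw [hef] at h <;> rw [h] at h'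
      · exact ((by simpa using h' : x.1 = y.1 ∧ i1 = i2)).1
      · simp at h'
      · simp at h'
      · exact (by simpa using h' : x.1 = y.1)
    exact Prod.ext h1 hxy2
  have htail2 : ∀ e ∈ projTree R, Reaches (projTree R) r e.1 := by
    intro ab hab
    obtain ⟨e, he, _, htl⟩ := exists_of_mem_projTree hab
    have h := reaches_proj hsub (htail e he)
    rcases htl with ⟨ii, h1⟩ | h1 <;> rw [h1] at h <;> exact h
  have hterm2 : ∀ t ∈ S, Reaches (projTree R) r t := by
    intro t ht
    exact reaches_proj hsub (hterm (Sum.inl t) (Finset.mem_image_of_mem _ ht))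
  -- Part 3: cost
  have hcost : treeCost c (projTree R) = treeCost (auxCost c) R := by
    have himg : projTree R =
        (R.filter (fun e => ∃ bk : V × ℕ, e.2 = Sum.inr bk)).image
          (fun e => (auxProj e.1, auxProj e.2)) := by
      apply Finset.Subset.antisymm
      · intro ab hab
        obtain ⟨e, he, ⟨jj, hh⟩, htl⟩ := exists_of_mem_projTree hab
        refine Finset.mem_image.mpr
          ⟨e, Finset.mem_filter.mpr ⟨he, ⟨(ab.2, jj), hh⟩⟩, ?_⟩
        have h2 : auxProj e.2 = ab.2 := by rw [hh]; rfl
        have h1 : auxProj e.1 = ab.1 := by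
          rcases htl with ⟨ii, h⟩ | h <;> rw [h] <;> rfl
        exact Prod.ext h1 h2
      · intro ab hab
        obtain ⟨e, hef, rfl⟩ := Finset.mem_image.mp hab
        obtain ⟨he, bk, hh⟩ := Finset.mem_filter.mp hef
        rcases mem_auxEdges_cases (hsub he) with ⟨a,p,b,heq,hE,_⟩ | ⟨b,heq,hE,_⟩ |
            ⟨a,p,heq,_⟩ <;> subst heq
        · exact mem_projTree_inr he
        · exact mem_projTree_inl he
        · simp at hh
    have hinj : ∀ x ∈ R.filter (fun e => ∃ bk : V × ℕ, e.2 = Sum.inr bk),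
        ∀ y ∈ R.filter (fun e => ∃ bk : V × ℕ, e.2 = Sum.inr bk),
        (auxProj x.1, auxProj x.2) = (auxProj y.1, auxProj y.2) → x = y := by
      intro x hx y hy hgxy
      obtain ⟨hxR, ⟨b1, k1⟩, hx2⟩ := Finset.mem_filter.mp hx
      obtain ⟨hyR, ⟨b2, k2⟩, hy2⟩ := Finset.mem_filter.mp hy
      have hpr2 : auxProj x.2 = auxProj y.2 := congrArg Prod.snd hgxy
      rw [hx2, hy2] at hpr2
      have hb : b1 = b2 := hpr2
      have hk : k1 = k2 := hdup b1 k1 k2 x y hxR hyR hx2 (by rw [hy2, hb])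
      exact hUniq x hxR y hyR (by rw [hx2, hy2, hb, hk])
    have hcost1 : ∀ e ∈ R.filter (fun e => ∃ bk : V × ℕ, e.2 = Sum.inr bk),
        c (auxProj e.1, auxProj e.2) = auxCost c e := by
      intro e he'
      obtain ⟨he, bk, hh⟩ := Finset.mem_filter.mp he'
      rcases mem_auxEdges_cases (hsub he) with ⟨a,p,b,heq,hE,_⟩ | ⟨b,heq,hE,_⟩ |
          ⟨a,p,heq,_⟩ <;> subst heq
      · rfl
      · rfl
      · simp at hh
    have hcost0 : ∀ e ∈ R.filter (fun e => ¬ ∃ bk : V × ℕ, e.2 = Sum.inr bk),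
        auxCost c e = 0 := by
      intro e he'
      obtain ⟨he, hn⟩ := Finset.mem_filter.mp he'
      rcases mem_auxEdges_cases (hsub he) with ⟨a,p,b,heq,hE,_⟩ | ⟨b,heq,hE,_⟩ |
          ⟨a,p,heq,_⟩ <;> subst heq
      · exact absurd ⟨(b, p + d (a,b)), rfl⟩ hn
      · exact absurd ⟨(b, d (r,b)), rfl⟩ hn
      · rfl
    have hz : ∑ e ∈ R.filter (fun e => ¬ ∃ bk : V × ℕ, e.2 = Sum.inr bk),
        auxCost c e = 0 := Finset.sum_eq_zero hcost0
    calc treeCost c (projTree R)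
        = ∑ e ∈ (R.filter (fun e => ∃ bk : V × ℕ, e.2 = Sum.inr bk)).image
            (fun e => (auxProj e.1, auxProj e.2)), c e := by rw [treeCost, himg]
      _ = ∑ e ∈ R.filter (fun e => ∃ bk : V × ℕ, e.2 = Sum.inr bk),
            c (auxProj e.1, auxProj e.2) := Finset.sum_image hinj
      _ = ∑ e ∈ R.filter (fun e => ∃ bk : V × ℕ, e.2 = Sum.inr bk),
            auxCost c e := Finset.sum_congr rfl hcost1
      _ = treeCost (auxCost c) R := by
          rw [treeCost, ← Finset.sum_filter_add_sum_filter_not R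
            (fun e => ∃ bk : V × ℕ, e.2 = Sum.inr bk) (auxCost c), hz, add_zero]
  -- Part 4: delays
  have hdel : ∀ t ∈ S, ∃ k ≤ D, DelayReaches (projTree R) d r t k := by
    intro t ht
    by_cases htr : t = r
    · subst htr; exact ⟨0, Nat.zero_le _, Relation.ReflTransGen.refl⟩
    · have h := hterm (Sum.inl t) (Finset.mem_image_of_mem _ ht)
      rcases reach_delay hd hsub h with h0 | ⟨b, p, heq, _⟩ |
          ⟨t', heq, hne, p, hp1, hpD, hDR⟩
      · exact absurd (by simpa using h0 : t = r) htr
      · simp at heq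
      · obtain rfl : t = t' := by simpa using heq
        exact ⟨p, hpD, hDR⟩
  exact ⟨hsubE, ⟨hroot2, hdeg2, htail2, hterm2⟩, hcost.trans hC, hdel⟩
end

section
/- Let H be the layered auxiliary graph constructed from G with delay bound D (with D copies v^1,…,v^D of each non-root vertex v, edges (v_j^i, v_l^{i+d(e)}) of cost c(e) for each edge e=(v_j,v_l) of G and each feasible layer i, edges (r, v_l^{d(e)}) of cost c(e) for edges incident to r, and an extra terminal copy of each terminal of S∖{r} joined by cost-0 edges from all of its D layer copies), and let S_H be its terminal set. If R' is a Steiner tree of G spanning S in which the delay from r to every vertex of R' is at most D and whose total cost is C, then there exists a directed Steiner tree rooted at r spanning S_H in H with total cost at most C. -/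
/-- second direction of Theorem 2 of the paper.
If `R'` is a Steiner tree of `G` rooted at `r` spanning `S` in which the
delay from `r` to every vertex of `R'` is at most `D`, and whose total cost
is `C`, then the layered auxiliary graph `H` contains a directed Steiner
tree rooted at `r` spanning the terminal set `S_H` whose total cost
is at most `C`. -/
theorem aux_steiner_tree_of_delay_bounded_steiner_tree
    {V : Type*} [Fintype V] [DecidableEq V]
    (E : Finset (V × V)) (S : Finset V) (r : V) (hr : r ∈ S)
    (c : V × V → ℕ) (d : V × V → ℕ)
    (hc : ∀ e ∈ E, 0 < c e) (hd : ∀ e ∈ E, 0 < d e)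
    (D : ℕ) (hD : 0 < D)
    (R' : Finset (V × V)) (C : ℕ)
    (hsub : R' ⊆ E)
    (htree : IsDirSteinerTree R' r S)
    (hdelay : ∀ x : V, MemVerts R' x → ∃ k ≤ D, DelayReaches R' d r x k)
    (hC : treeCost c R' = C) :
    ∃ R ⊆ auxEdges E d S r D,
      IsDirSteinerTree R (Sum.inl r) (auxTerminals S) ∧
      treeCost (auxCost c) R ≤ C := by
  classical
  obtain ⟨hroot, hdeg, htail, hterm⟩ := htree
  -- uniqueness of delays
  have huniq : ∀ k1 x k2, DelayReaches R' d r x k1 → DelayReaches R' d r x k2 → k1 = k2 := by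
    intro k1
    induction k1 using Nat.strong_induction_on with
    | _ k1 ih =>
      intro x k2 h1 h2
      rcases h1.cases_tail with heq | ⟨⟨p, j⟩, hp, he, hk⟩
      · obtain ⟨hx, hk1⟩ := Prod.mk.injEq .. ▸ heq
        subst hx
        rcases h2.cases_tail with heq2 | ⟨⟨q, i⟩, hq, he2, hk2⟩
        · obtain ⟨_, hk2⟩ := Prod.mk.injEq .. ▸ heq2
          omega
        · exact absurd rfl (hroot _ he2)
      · have hxr : x ≠ r := hroot _ he
        rcases h2.cases_tail with heq2 | ⟨⟨q, i⟩, hq, he2, hk2⟩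
        · obtain ⟨hx, _⟩ := Prod.mk.injEq .. ▸ heq2
          exact absurd hx hxr
        · dsimp only at hk hk2 he he2
          have hpq : (p, x) = (q, x) := by
            have := Finset.card_le_one.mp (hdeg x)
            exact this _ (Finset.mem_filter.mpr ⟨he, rfl⟩) _ (Finset.mem_filter.mpr ⟨he2, rfl⟩)
          have hpq' : p = q := (Prod.mk.injEq .. ▸ hpq).1
          subst hpq'
          have hdpos : 0 < d (p, x) := hd _ (hsub he)
          have hji : j = i := ih j (by omega) p i hp hq
          omega
  have hDRex : ∀ x, Reaches R' r x → ∃ k, DelayReaches R' d r x k := by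
    intro x hx
    induction hx with
    | refl => exact ⟨0, Relation.ReflTransGen.refl⟩
    | @tail b cv h h' ih =>
      obtain ⟨k, hk⟩ := ih
      exact ⟨k + d (b, cv), hk.tail ⟨h', rfl⟩⟩
  set K : V → ℕ := fun x => if h : ∃ k, DelayReaches R' d r x k then h.choose else 0 with hKdef
  have hK : ∀ x k, DelayReaches R' d r x k → K x = k := by
    intro x k h
    have hex : ∃ k, DelayReaches R' d r x k := ⟨k, h⟩
    simp only [hKdef, dif_pos hex]
    exact huniq _ _ _ hex.choose_spec h
  have hKr : K r = 0 := hK r 0 Relation.ReflTransGen.refl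
  have hKDR : ∀ x, Reaches R' r x → DelayReaches R' d r x (K x) := by
    intro x hx
    obtain ⟨k, hk⟩ := hDRex x hx
    rw [hK x k hk]; exact hk
  have hKedge : ∀ e ∈ R', Reaches R' r e.1 → K e.2 = K e.1 + d e := by
    intro e he hre
    have : DelayReaches R' d r e.2 (K e.1 + d e) := by
      refine (hKDR _ hre).tail ?_
      exact ⟨by simpa using he, rfl⟩
    exact hK _ _ this
  have hheads : ∀ e ∈ R', Reaches R' r e.2 := by
    intro e he
    exact (htail e he).tail (by simpa using he)
  have hKpos : ∀ x, Reaches R' r x → x ≠ r → 1 ≤ K x := by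
    intro x hx hxr
    have h := hKDR x hx
    rcases Nat.eq_zero_or_pos (K x) with h0 | h1
    · exfalso
      rw [h0] at h
      rcases h.cases_tail with heq | ⟨⟨p, j⟩, hp, he, hk⟩
      · exact hxr (Prod.mk.injEq .. ▸ heq).1
      · have := hd _ (hsub he); omega
    · exact h1
  have hhead : ∀ x, Reaches R' r x → x ≠ r → ∃ e ∈ R', e.2 = x := by
    intro x hx hxr
    rcases hx.cases_tail with heq | ⟨p, _, he⟩
    · exact absurd heq hxr
    · exact ⟨(p, x), he, rfl⟩
  have hKle : ∀ x, Reaches R' r x → x ≠ r → K x ≤ D := by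
    intro x hx hxr
    obtain ⟨e, he, hex⟩ := hhead x hx hxr
    obtain ⟨k, hkD, hdr⟩ := hdelay x ⟨e, he, Or.inr hex⟩
    rw [hK x k hdr]; exact hkD
  set lift : V → AuxV V := fun x => if x = r then Sum.inl r else Sum.inr (x, K x) with hliftdef
  set f : V × V → AuxV V × AuxV V := fun e => (lift e.1, Sum.inr (e.2, K e.2)) with hfdef
  set R : Finset (AuxV V × AuxV V) :=
    R'.image f ∪ (S.erase r).image (fun v => (Sum.inr (v, K v), Sum.inl v)) with hRdef
  have hliftr : lift r = Sum.inl r := by simp [hliftdef]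
  have hliftne : ∀ x, x ≠ r → lift x = Sum.inr (x, K x) := by
    intro x hx; simp [hliftdef, hx]
  have hliftinj : Function.Injective lift := by
    intro x y hxy
    by_cases hx : x = r <;> by_cases hy : y = r <;>
      simp_all [hliftdef]
  -- R ⊆ auxEdges
  have hRsub : R ⊆ auxEdges E d S r D := by
    intro x hx
    rw [hRdef] at hx
    rcases Finset.mem_union.mp hx with hx | hx
    · obtain ⟨e, he, rfl⟩ := Finset.mem_image.mp hx
      have hbr : e.2 ≠ r := hroot e he
      have hra : Reaches R' r e.1 := htail e he
      have hrb : Reaches R' r e.2 := hheads e he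
      have hKb : K e.2 = K e.1 + d e := hKedge e he hra
      have hKbD : K e.2 ≤ D := hKle _ hrb hbr
      unfold auxEdges
      by_cases har : e.1 = r
      · apply Finset.mem_union_left
        apply Finset.mem_union_right
        rw [Finset.mem_image]
        refine ⟨e, ?_, ?_⟩
        · rw [Finset.mem_filter]
          refine ⟨hsub he, har, hbr, ?_⟩
          rw [har, hKr] at hKb; omega
        · rw [hfdef]
          have : d e = K e.2 := by rw [har, hKr] at hKb; omega
          simp [har, hliftr, this]
      · apply Finset.mem_union_left
        apply Finset.mem_union_left
        rw [Finset.mem_image]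
        refine ⟨(e, K e.1), ?_, ?_⟩
        · rw [Finset.mem_filter]
          constructor
          · rw [Finset.mem_product, Finset.mem_filter, Finset.mem_Icc]
            exact ⟨⟨hsub he, har, hbr⟩, hKpos _ hra har, hKle _ hra har⟩
          · show K e.1 + d e ≤ D
            omega
        · rw [hfdef]
          simp [hliftne _ har, ← hKb]
    · obtain ⟨v, hv, rfl⟩ := Finset.mem_image.mp hx
      have hvr : v ≠ r := Finset.ne_of_mem_erase hv
      have hvS : v ∈ S := Finset.mem_of_mem_erase hv
      have hrv : Reaches R' r v := hterm v hvS
      unfold auxEdges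
      apply Finset.mem_union_right
      rw [Finset.mem_image]
      refine ⟨(v, K v), ?_, rfl⟩
      rw [Finset.mem_product, Finset.mem_Icc]
      exact ⟨hv, hKpos _ hrv hvr, hKle _ hrv hvr⟩
  -- reachability lift
  have hlift : ∀ x, Reaches R' r x → Reaches R (Sum.inl r) (lift x) := by
    intro x hx
    induction hx with
    | refl => rw [hliftr]; exact Relation.ReflTransGen.refl
    | @tail b cv h h' ih =>
      refine ih.tail ?_
      have hmem : f (b, cv) ∈ R := by
        rw [hRdef]
        exact Finset.mem_union_left _ (Finset.mem_image_of_mem f (by simpa using h'))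
      have hcr : cv ≠ r := hroot _ (show (b, cv) ∈ R' by simpa using h')
      have : f (b, cv) = (lift b, lift cv) := by
        rw [hfdef, hliftne cv hcr]
      rwa [this] at hmem
  refine ⟨R, hRsub, ⟨?_, ?_, ?_, ?_⟩, ?_⟩
  · -- no edge into root
    intro e he
    rw [hRdef] at he
    rcases Finset.mem_union.mp he with he | he
    · obtain ⟨e', _, rfl⟩ := Finset.mem_image.mp he
      simp [hfdef]
    · obtain ⟨v, hv, rfl⟩ := Finset.mem_image.mp he
      have := Finset.ne_of_mem_erase hv
      simp [this]
  · -- in-degree ≤ 1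
    intro w
    rw [Finset.card_le_one]
    intro e1 h1 e2 h2
    obtain ⟨h1R, h1w⟩ := Finset.mem_filter.mp h1
    obtain ⟨h2R, h2w⟩ := Finset.mem_filter.mp h2
    rw [hRdef] at h1R h2R
    rcases Finset.mem_union.mp h1R with h1R | h1R <;>
      rcases Finset.mem_union.mp h2R with h2R | h2R
    · obtain ⟨a, ha, rfl⟩ := Finset.mem_image.mp h1R
      obtain ⟨b, hb, rfl⟩ := Finset.mem_image.mp h2R
      simp only [hfdef] at h1w h2w
      have hab : a.2 = b.2 ∧ K a.2 = K b.2 := by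
        rw [← h2w] at h1w
        simpa using h1w
      have : a = b := by
        have := Finset.card_le_one.mp (hdeg a.2)
        exact this a (Finset.mem_filter.mpr ⟨ha, rfl⟩) b (Finset.mem_filter.mpr ⟨hb, hab.1.symm⟩)
      rw [this]
    · obtain ⟨a, ha, rfl⟩ := Finset.mem_image.mp h1R
      obtain ⟨v, hv, rfl⟩ := Finset.mem_image.mp h2R
      simp only [hfdef] at h1w
      rw [← h2w] at h1w
      simp at h1w
    · obtain ⟨v, hv, rfl⟩ := Finset.mem_image.mp h1R
      obtain ⟨a, ha, rfl⟩ := Finset.mem_image.mp h2R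
      simp only [hfdef] at h2w
      rw [← h2w] at h1w
      simp at h1w
    · obtain ⟨v, hv, rfl⟩ := Finset.mem_image.mp h1R
      obtain ⟨u, hu, rfl⟩ := Finset.mem_image.mp h2R
      simp only at h1w h2w
      rw [← h2w] at h1w
      have : v = u := by simpa using h1w
      rw [this]
  · -- tails reachable
    intro e he
    rw [hRdef] at he
    rcases Finset.mem_union.mp he with he | he
    · obtain ⟨e', he', rfl⟩ := Finset.mem_image.mp he
      exact hlift e'.1 (htail e' he')
    · obtain ⟨v, hv, rfl⟩ := Finset.mem_image.mp he
      have hvr : v ≠ r := Finset.ne_of_mem_erase hv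
      have := hlift v (hterm v (Finset.mem_of_mem_erase hv))
      rwa [hliftne v hvr] at this
  · -- terminals reachable
    intro t ht
    obtain ⟨v, hvS, rfl⟩ := Finset.mem_image.mp ht
    by_cases hvr : v = r
    · subst hvr; exact Relation.ReflTransGen.refl
    · have h1 := hlift v (hterm v hvS)
      rw [hliftne v hvr] at h1
      refine h1.tail ?_
      show (Sum.inr (v, K v), Sum.inl v) ∈ R
      rw [hRdef]
      exact Finset.mem_union_right _
        (Finset.mem_image_of_mem _ (Finset.mem_erase.mpr ⟨hvr, hvS⟩))
  · -- cost bound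
    have hfinj : Set.InjOn f R' := by
      intro a _ b _ hab
      rw [hfdef] at hab
      obtain ⟨h1, h2⟩ := Prod.mk.injEq .. ▸ hab
      have ha1 : a.1 = b.1 := hliftinj h1
      have ha2 : a.2 = b.2 := (Prod.mk.injEq .. ▸ Sum.inr_injective h2).1
      exact Prod.ext ha1 ha2
    have hcostf : ∀ e ∈ R', auxCost c (f e) = c e := by
      intro e he
      by_cases har : e.1 = r
      · rw [hfdef]
        simp only [har, hliftr]
        show c (r, e.2) = c e
        rw [← har]
      · rw [hfdef]
        simp only [hliftne _ har]
        show c (e.1, e.2) = c e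
        rfl
    have hdisj : Disjoint (R'.image f)
        ((S.erase r).image (fun v => (Sum.inr (v, K v), Sum.inl v))) := by
      rw [Finset.disjoint_left]
      intro a ha hb
      obtain ⟨e, _, rfl⟩ := Finset.mem_image.mp ha
      obtain ⟨v, _, hv⟩ := Finset.mem_image.mp hb
      rw [hfdef] at hv
      simp at hv
    calc treeCost (auxCost c) R
        = (∑ e ∈ R'.image f, auxCost c e) +
            ∑ e ∈ (S.erase r).image (fun v => (Sum.inr (v, K v), Sum.inl v)),
              auxCost c e := by
          rw [hRdef]; exact Finset.sum_union hdisj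
      _ = (∑ e ∈ R', c e) +
            ∑ e ∈ (S.erase r).image (fun v => (Sum.inr (v, K v), Sum.inl v)),
              auxCost c e := by
          rw [Finset.sum_image (fun a ha b hb h => hfinj ha hb h)]
          rw [Finset.sum_congr rfl hcostf]
      _ = ∑ e ∈ R', c e := by
          have : ∀ e ∈ (S.erase r).image (fun v => (Sum.inr (v, K v), Sum.inl v)),
              auxCost c e = 0 := by
            intro e he
            obtain ⟨v, _, rfl⟩ := Finset.mem_image.mp he
            rfl
          rw [Finset.sum_congr rfl this]
          simp
      _ = C := hC
      _ ≤ C := le_rfl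
end

section
/- Let H be the layered auxiliary graph constructed from G with delay bound D, and let S_H be its terminal set. Then the minimum cost of an r-rooted directed Steiner tree spanning S_H in H equals the minimum cost of a Steiner tree of G spanning S in which the delay from r to every terminal is at most D; in particular, one such tree exists in H if and only if one exists in G (Theorem 2 of the paper, combining both directions). -/
lemma reaches_mono {α : Type*} {R R' : Finset (α × α)} (h : R ⊆ R') {a b : α}
    (hr : Reaches R a b) : Reaches R' a b :=
  Relation.ReflTransGen.mono (fun _ _ hxy => h hxy) _ _ hr

lemma delayReaches_mono {α : Type*} {R R' : Finset (α × α)} {d : α × α → ℕ}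
    (h : R ⊆ R') {a b : α} {k : ℕ}
    (hr : DelayReaches R d a b k) : DelayReaches R' d a b k :=
  Relation.ReflTransGen.mono (fun _ _ hxy => ⟨h hxy.1, hxy.2⟩) _ _ hr

lemma delayReaches_reaches {α : Type*} {R : Finset (α × α)} {d : α × α → ℕ}
    {a b : α} {k : ℕ} (h : DelayReaches R d a b k) : Reaches R a b :=
  Relation.ReflTransGen.lift (p := fun x y => (x, y) ∈ R) Prod.fst (fun _ _ hpq => hpq.1) _ _ h

lemma reaches_delayReaches {α : Type*} {R : Finset (α × α)} (d : α × α → ℕ)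
    {a b : α} (h : Reaches R a b) : ∃ k, DelayReaches R d a b k := by
  induction h with
  | refl => exact ⟨0, Relation.ReflTransGen.refl⟩
  | @tail x y hxy he ih =>
      obtain ⟨k, hk⟩ := ih
      exact ⟨k + d (x, y), hk.tail ⟨he, rfl⟩⟩

/-- generic chain-extension in the delay graph -/
lemma delayReaches_extend {α : Type*} {R : Finset (α × α)} {d : α × α → ℕ}
    {r b t : α} {m : ℕ} (hreach : Reaches R b t) (h : DelayReaches R d r b m) :
    ∃ k, m ≤ k ∧ DelayReaches R d r t k := by
  induction hreach with
  | refl => exact ⟨m, le_rfl, h⟩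
  | @tail x y hxy he ih =>
      obtain ⟨k, hk, hdk⟩ := ih
      exact ⟨k + d (x, y), le_trans hk (Nat.le_add_right _ _), hdk.tail ⟨he, rfl⟩⟩

/-- uniqueness of delays in an arborescence -/
lemma delay_unique {V : Type*} {E R' : Finset (V × V)} {d : V × V → ℕ} {r : V}
    (hRE : R' ⊆ E) (hd : ∀ e ∈ E, 0 < d e)
    (hroot : ∀ e ∈ R', e.2 ≠ r)
    (hindeg : ∀ v, ∀ e ∈ R', ∀ e' ∈ R', e.2 = v → e'.2 = v → e = e') :
    ∀ k k' v, DelayReaches R' d r v k → DelayReaches R' d r v k' → k = k' := by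
  intro k
  induction k using Nat.strong_induction_on with
  | _ k ih =>
    intro k' v h h'
    rcases h.cases_tail with heq | ⟨p, hp, hstep⟩
    · -- (v,k) = (r,0)
      have hv : v = r := congrArg Prod.fst heq
      have hk : k = 0 := congrArg Prod.snd heq
      rcases h'.cases_tail with heq' | ⟨q, hq, hstep'⟩
      · have : k' = 0 := congrArg Prod.snd heq'
        omega
      · exact absurd hv (hroot _ hstep'.1)
    · have hvr : v ≠ r := hroot _ hstep.1
      rcases h'.cases_tail with heq' | ⟨q, hq, hstep'⟩
      · exact absurd (congrArg Prod.fst heq') hvr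
      · have hpq : (p.1, v) = (q.1, v) :=
          hindeg v _ hstep.1 _ hstep'.1 rfl rfl
        have h1 : p.1 = q.1 := by injection hpq
        have hs : k = p.2 + d (p.1, v) := hstep.2
        have hs' : k' = q.2 + d (q.1, v) := hstep'.2
        rw [← h1] at hs'
        have hdpos : 0 < d (p.1, v) := hd _ (hRE hstep.1)
        have hklt : p.2 < k := by omega
        have hp' : DelayReaches R' d r p.1 p.2 := hp
        have hq' : DelayReaches R' d r p.1 q.2 := by
          rw [h1]; exact hq
        have := ih p.2 hklt q.2 p.1 hp' hq'
        omega

lemma delay_pos {V : Type*} {E R' : Finset (V × V)} {d : V × V → ℕ} {r v : V}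
    (hRE : R' ⊆ E) (hd : ∀ e ∈ E, 0 < d e) (hv : v ≠ r) {k : ℕ}
    (h : DelayReaches R' d r v k) : 1 ≤ k := by
  rcases h.cases_tail with heq | ⟨p, _, hstep⟩
  · exact absurd (congrArg Prod.fst heq) hv
  · have hs : k = p.2 + d (p.1, v) := hstep.2
    have := hd _ (hRE hstep.1)
    omega

/-- restriction of plain reachability to a pruned edge set -/
lemma reaches_restrict {V : Type*} {R' R'' : Finset (V × V)} {S : Finset V}
    (hR'' : ∀ e ∈ R', (∃ t ∈ S, Reaches R' e.2 t) → e ∈ R'') :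
    ∀ a b, Reaches R' a b → (∃ t ∈ S, Reaches R' b t) → Reaches R'' a b := by
  intro a b h
  induction h using Relation.ReflTransGen.head_induction_on with
  | refl => intro _; exact Relation.ReflTransGen.refl
  | head hstep hrest ih =>
    rename_i x y
    intro ht
    obtain ⟨t, htS, hbt⟩ := ht
    have hy : Reaches R' y b := hrest
    have hyt : Reaches R' y t := hy.trans hbt
    exact Relation.ReflTransGen.head (hR'' _ hstep ⟨t, htS, hyt⟩) (ih ⟨t, htS, hbt⟩)

/-- restriction of delayed reachability to a pruned edge set -/
lemma delayReaches_restrict {V : Type*} {R' R'' : Finset (V × V)} {d : V × V → ℕ}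
    {S : Finset V}
    (hR'' : ∀ e ∈ R', (∃ t ∈ S, Reaches R' e.2 t) → e ∈ R'') :
    ∀ (p q : V × ℕ),
      Relation.ReflTransGen
        (fun p q : V × ℕ => (p.1, q.1) ∈ R' ∧ q.2 = p.2 + d (p.1, q.1)) p q →
      (∃ t ∈ S, Reaches R' q.1 t) →
      Relation.ReflTransGen
        (fun p q : V × ℕ => (p.1, q.1) ∈ R'' ∧ q.2 = p.2 + d (p.1, q.1)) p q := by
  intro p q h
  induction h using Relation.ReflTransGen.head_induction_on with
  | refl => intro _; exact Relation.ReflTransGen.refl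
  | head hstep hrest ih =>
    rename_i x y
    intro ht
    obtain ⟨t, htS, hbt⟩ := ht
    have hy : Reaches R' y.1 q.1 :=
      Relation.ReflTransGen.lift (p := fun x y => (x, y) ∈ R') Prod.fst (fun _ _ hpq => hpq.1) _ _ hrest
    have hyt : Reaches R' y.1 t := hy.trans hbt
    exact Relation.ReflTransGen.head ⟨hR'' _ hstep.1 ⟨t, htS, hyt⟩, hstep.2⟩ (ih ⟨t, htS, hbt⟩)
lemma toAux {V : Type*} [Fintype V] [DecidableEq V]
    (E : Finset (V × V)) (S : Finset V) (r : V)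
    (c : V × V → ℕ) (d : V × V → ℕ)
    (hd : ∀ e ∈ E, 0 < d e) (D : ℕ) (R' : Finset (V × V))
    (hR'E : R' ⊆ E) (hTree : IsDirSteinerTree R' r S)
    (hdel : ∀ t ∈ S, ∃ k ≤ D, DelayReaches R' d r t k) :
    ∃ R ⊆ auxEdges E d S r D, IsDirSteinerTree R (Sum.inl r) (auxTerminals S) ∧
      treeCost (auxCost c) R ≤ treeCost c R' := by
  classical
  obtain ⟨hroot, hindeg, htails, hterm⟩ := hTree
  have hindeg' : ∀ v : V, ∀ e ∈ R', ∀ e' ∈ R', e.2 = v → e'.2 = v → e = e' := by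
    intro v e he e' he' h1 h2
    exact Finset.card_le_one.mp (hindeg v) e (Finset.mem_filter.mpr ⟨he, h1⟩)
      e' (Finset.mem_filter.mpr ⟨he', h2⟩)
  have huniq := delay_unique hR'E hd hroot hindeg'
  set R'' : Finset (V × V) :=
    R'.filter (fun e => ∃ t ∈ S, Reaches R' e.2 t) with hR''def
  have hsub'' : R'' ⊆ R' := Finset.filter_subset _ _
  have hmem'' : ∀ e ∈ R', (∃ t ∈ S, Reaches R' e.2 t) → e ∈ R'' := by
    intro e he hP; exact Finset.mem_filter.mpr ⟨he, hP⟩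
  have hP'' : ∀ e ∈ R'', ∃ t ∈ S, Reaches R' e.2 t := by
    intro e he; exact (Finset.mem_filter.mp he).2
  set del : V → ℕ := fun v =>
    if h : ∃ k, DelayReaches R' d r v k then h.choose else 0 with hdeldef
  have hdelspec : ∀ v k, DelayReaches R' d r v k → del v = k := by
    intro v k hk
    have hex : ∃ k, DelayReaches R' d r v k := ⟨k, hk⟩
    simp only [hdeldef, dif_pos hex]
    exact huniq _ _ _ hex.choose_spec hk
  have hreachdel : ∀ v, Reaches R' r v → DelayReaches R' d r v (del v) := by
    intro v h
    obtain ⟨k, hk⟩ := reaches_delayReaches d h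
    rw [hdelspec v k hk]; exact hk
  have f1 : del r = 0 := hdelspec r 0 Relation.ReflTransGen.refl
  have f2 : ∀ v, v ≠ r → Reaches R' r v → 1 ≤ del v := by
    intro v hv h
    exact delay_pos hR'E hd hv (hreachdel v h)
  have f3 : ∀ e ∈ R', del e.2 = del e.1 + d e := by
    intro e he
    have h1 : DelayReaches R' d r e.1 (del e.1) := hreachdel e.1 (htails e he)
    have h2 : DelayReaches R' d r e.2 (del e.1 + d e) := by
      refine h1.tail ⟨?_, ?_⟩ <;> simp [he]
    exact hdelspec _ _ h2
  have hreach2 : ∀ e ∈ R', Reaches R' r e.2 := by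
    intro e he
    exact (htails e he).tail (by simpa using he)
  have f4 : ∀ e ∈ R'', del e.2 ≤ D := by
    intro e he
    obtain ⟨t, htS, h2t⟩ := hP'' e he
    obtain ⟨k, hmk, hk⟩ :=
      delayReaches_extend h2t (hreachdel e.2 (hreach2 e (hsub'' he)))
    obtain ⟨k', hk'D, hk'⟩ := hdel t htS
    have : k = k' := huniq _ _ _ hk hk'
    omega
  have fterm : ∀ t ∈ S, del t ≤ D := by
    intro t ht
    obtain ⟨k, hkD, hk⟩ := hdel t ht
    rw [hdelspec t k hk]; exact hkD
  set node : V → AuxV V := fun u =>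
    if u = r then Sum.inl r else Sum.inr (u, del u) with hnodedef
  set lift : V × V → AuxV V × AuxV V :=
    fun e => (node e.1, Sum.inr (e.2, del e.2)) with hliftdef
  set R : Finset (AuxV V × AuxV V) :=
    R''.image lift ∪ (S.erase r).image
      (fun t => (Sum.inr (t, del t), Sum.inl t)) with hRdef
  -- reachability lifts to H
  have hRrestrict : ∀ v, Reaches R' r v → (∃ t ∈ S, Reaches R' v t) →
      Reaches R'' r v :=
    fun v h ht => reaches_restrict hmem'' r v h ht
  have hreachH : ∀ v, Reaches R'' r v → Reaches R (Sum.inl r) (node v) := by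
    intro v h
    induction h with
    | refl =>
      have h0 : node r = Sum.inl r := by simp [hnodedef]
      rw [h0]
      exact Relation.ReflTransGen.refl
    | @tail x y hxy he ih =>
      have hyr : y ≠ r := hroot _ (hsub'' he)
      have hmem : (node x, Sum.inr (y, del y)) ∈ R := by
        refine Finset.mem_union_left _ (Finset.mem_image.mpr ⟨(x, y), he, ?_⟩)
        simp [hliftdef]
      have hnodey : node y = Sum.inr (y, del y) := by simp [hnodedef, hyr]
      rw [hnodey]
      exact ih.tail hmem
  have hnode_ne : ∀ u, u ≠ r → node u = Sum.inr (u, del u) := by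
    intro u hu; simp [hnodedef, hu]
  have hsubA : R ⊆ auxEdges E d S r D := by
    rw [hRdef]
    apply Finset.union_subset
    · intro x hx
      obtain ⟨e, he, rfl⟩ := Finset.mem_image.mp hx
      have heR' : e ∈ R' := hsub'' he
      have heE : e ∈ E := hR'E heR'
      have he2r : e.2 ≠ r := hroot _ heR'
      have hde : 0 < d e := hd _ heE
      have h3 := f3 e heR'
      have h4 := f4 e he
      by_cases he1 : e.1 = r
      · apply Finset.mem_union_left
        apply Finset.mem_union_right
        have h0 : del e.1 = 0 := by rw [he1]; exact f1
        refine Finset.mem_image.mpr ⟨e, ?_, ?_⟩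
        · exact Finset.mem_filter.mpr ⟨heE, he1, he2r, by omega⟩
        · have hn : node e.1 = Sum.inl r := by simp [hnodedef, he1]
          have h2 : del e.2 = d e := by omega
          simp [hliftdef, hn, h2]
      · apply Finset.mem_union_left
        apply Finset.mem_union_left
        have h11 : 1 ≤ del e.1 := f2 _ he1 (htails e heR')
        refine Finset.mem_image.mpr ⟨(e, del e.1), ?_, ?_⟩
        · refine Finset.mem_filter.mpr ⟨Finset.mem_product.mpr
            ⟨Finset.mem_filter.mpr ⟨heE, he1, he2r⟩,
             Finset.mem_Icc.mpr ⟨h11, by omega⟩⟩, ?_⟩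
          show del e.1 + d e ≤ D
          omega
        · have hn : node e.1 = Sum.inr (e.1, del e.1) := hnode_ne _ he1
          show (Sum.inr (e.1, del e.1), Sum.inr (e.2, del e.1 + d e)) = lift e
          rw [hliftdef]
          simp only [hn, ← h3]
    · intro x hx
      obtain ⟨t, ht, rfl⟩ := Finset.mem_image.mp hx
      have htr : t ≠ r := (Finset.mem_erase.mp ht).1
      have htS : t ∈ S := (Finset.mem_erase.mp ht).2
      apply Finset.mem_union_right
      exact Finset.mem_image.mpr ⟨(t, del t), Finset.mem_product.mpr
        ⟨ht, Finset.mem_Icc.mpr ⟨f2 _ htr (hterm t htS), fterm t htS⟩⟩, rfl⟩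
  have hRshape : ∀ x ∈ R, (∃ e ∈ R'', x = lift e) ∨
      ∃ t, t ∈ S.erase r ∧ x = (Sum.inr (t, del t), Sum.inl t) := by
    intro x hx
    rw [hRdef] at hx
    rcases Finset.mem_union.mp hx with h | h
    · obtain ⟨e, he, rfl⟩ := Finset.mem_image.mp h
      exact Or.inl ⟨e, he, rfl⟩
    · obtain ⟨t, ht, rfl⟩ := Finset.mem_image.mp h
      exact Or.inr ⟨t, ht, rfl⟩
  have hliftmem : ∀ e ∈ R'', lift e ∈ R := by
    intro e he
    rw [hRdef]
    exact Finset.mem_union_left _ (Finset.mem_image.mpr ⟨e, he, rfl⟩)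
  have hTree : IsDirSteinerTree R (Sum.inl r) (auxTerminals S) := by
    refine ⟨?_, ?_, ?_, ?_⟩
    · intro x hx
      rcases hRshape x hx with ⟨e, he, rfl⟩ | ⟨t, ht, rfl⟩
      · rw [hliftdef]; simp
      · simp only
        intro hcontra
        exact (Finset.mem_erase.mp ht).1 (Sum.inl.inj hcontra)
    · intro w
      rw [Finset.card_le_one]
      intro a ha b hb
      obtain ⟨haR, ha2⟩ := Finset.mem_filter.mp ha
      obtain ⟨hbR, hb2⟩ := Finset.mem_filter.mp hb
      rcases hRshape a haR with ⟨e1, he1, rfl⟩ | ⟨t1, ht1, rfl⟩ <;>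
        rcases hRshape b hbR with ⟨e2, he2, rfl⟩ | ⟨t2, ht2, rfl⟩
      · have h2 : (lift e1).2 = (lift e2).2 := by rw [ha2, hb2]
        rw [hliftdef] at h2
        simp only at h2
        have he12 : e1.2 = e2.2 := (Prod.mk.injEq _ _ _ _).mp (Sum.inr.inj h2) |>.1
        have : e1 = e2 := hindeg' e1.2 e1 (hsub'' he1) e2 (hsub'' he2) rfl he12.symm
        rw [this]
      · exfalso
        have h := ha2.trans hb2.symm
        rw [hliftdef] at h
        simp at h
      · exfalso
        have h := ha2.trans hb2.symm
        rw [hliftdef] at h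
        simp at h
      · have : (Sum.inl t1 : AuxV V) = Sum.inl t2 := by
          have := ha2.trans hb2.symm
          simpa using this
        have ht12 : t1 = t2 := Sum.inl.inj this
        rw [ht12]
    · intro x hx
      rcases hRshape x hx with ⟨e, he, rfl⟩ | ⟨t, ht, rfl⟩
      · obtain ⟨t, htS, h2t⟩ := hP'' e he
        have he1t : Reaches R' e.1 t := by
          refine Relation.ReflTransGen.trans ?_ h2t
          exact Relation.ReflTransGen.single (by simpa using hsub'' he)
        have h1 : Reaches R'' r e.1 :=
          hRrestrict e.1 (htails e (hsub'' he)) ⟨t, htS, he1t⟩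
        have := hreachH e.1 h1
        rw [hliftdef]
        exact this
      · have htr : t ≠ r := (Finset.mem_erase.mp ht).1
        have htS : t ∈ S := (Finset.mem_erase.mp ht).2
        have h1 : Reaches R'' r t :=
          hRrestrict t (hterm t htS) ⟨t, htS, Relation.ReflTransGen.refl⟩
        have := hreachH t h1
        rw [hnode_ne t htr] at this
        exact this
    · intro w hw
      obtain ⟨t, htS, rfl⟩ := Finset.mem_image.mp hw
      by_cases htr : t = r
      · rw [htr]
        exact Relation.ReflTransGen.refl
      · have h1 : Reaches R'' r t :=
          hRrestrict t (hterm t htS) ⟨t, htS, Relation.ReflTransGen.refl⟩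
        have h2 := hreachH t h1
        rw [hnode_ne t htr] at h2
        refine h2.tail ?_
        rw [hRdef]
        exact Finset.mem_union_right _
          (Finset.mem_image.mpr ⟨t, Finset.mem_erase.mpr ⟨htr, htS⟩, rfl⟩)
  refine ⟨R, hsubA, hTree, ?_⟩
  -- cost bound
  have hdisj : Disjoint (R''.image lift)
      ((S.erase r).image (fun t => (Sum.inr (t, del t), (Sum.inl t : AuxV V)))) := by
    rw [Finset.disjoint_left]
    intro x hx hx'
    obtain ⟨e, he, rfl⟩ := Finset.mem_image.mp hx
    obtain ⟨t, ht, hteq⟩ := Finset.mem_image.mp hx'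
    have : (Sum.inl t : AuxV V) = (lift e).2 := congrArg Prod.snd hteq
    rw [hliftdef] at this
    simp at this
  have hcost1 : ∀ t ∈ S.erase r,
      auxCost c (Sum.inr (t, del t), (Sum.inl t : AuxV V)) = 0 := by
    intro t _; rfl
  have hliftinj : ∀ e1 ∈ R'', ∀ e2 ∈ R'', lift e1 = lift e2 → e1 = e2 := by
    intro e1 he1 e2 he2 h
    rw [hliftdef] at h
    simp only [Prod.mk.injEq] at h
    have h2 : e1.2 = e2.2 := ((Prod.mk.injEq _ _ _ _).mp (Sum.inr.inj h.2)).1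
    exact hindeg' e1.2 e1 (hsub'' he1) e2 (hsub'' he2) rfl h2.symm
  have hcostlift : ∀ e ∈ R'', auxCost c (lift e) = c e := by
    intro e he
    rw [hliftdef]
    simp only [hnodedef]
    by_cases he1 : e.1 = r
    · rw [if_pos he1, ← he1]
      show c (e.1, e.2) = c e
      rw [Prod.mk.eta]
    · rw [if_neg he1]
      show c (e.1, e.2) = c e
      rw [Prod.mk.eta]
  calc treeCost (auxCost c) R
      = ∑ x ∈ R''.image lift, auxCost c x +
        ∑ x ∈ (S.erase r).image (fun t => (Sum.inr (t, del t), (Sum.inl t : AuxV V))),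
          auxCost c x := by
        rw [hRdef, treeCost, Finset.sum_union hdisj]
    _ = ∑ e ∈ R'', c e + 0 := by
        congr 1
        · rw [Finset.sum_image (fun a ha b hb => hliftinj a ha b hb)]
          exact Finset.sum_congr rfl hcostlift
        · refine Finset.sum_eq_zero ?_
          intro x hx
          obtain ⟨t, ht, rfl⟩ := Finset.mem_image.mp hx
          exact hcost1 t ht
    _ ≤ treeCost c R' := by
        rw [Nat.add_zero, treeCost]
        exact Finset.sum_le_sum_of_subset hsub''


lemma auxEdges_shape {V : Type*} [DecidableEq V] {E : Finset (V × V)}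
    {d : V × V → ℕ} {S : Finset V} {r : V} {D : ℕ} {e : AuxV V × AuxV V}
    (he : e ∈ auxEdges E d S r D) :
    (∃ a b i, e = (Sum.inr (a, i), Sum.inr (b, i + d (a, b))) ∧ (a, b) ∈ E ∧
      a ≠ r ∧ b ≠ r ∧ 1 ≤ i ∧ i + d (a, b) ≤ D) ∨
    (∃ b, e = (Sum.inl r, Sum.inr (b, d (r, b))) ∧ (r, b) ∈ E ∧ b ≠ r ∧
      d (r, b) ≤ D) ∨
    (∃ t i, e = (Sum.inr (t, i), Sum.inl t) ∧ t ∈ S ∧ t ≠ r ∧ 1 ≤ i ∧ i ≤ D) := by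
  unfold auxEdges at he
  rcases Finset.mem_union.mp he with h | h
  · rcases Finset.mem_union.mp h with h | h
    · obtain ⟨⟨⟨a, b⟩, i⟩, hp, rfl⟩ := Finset.mem_image.mp h
      obtain ⟨hp1, hp2⟩ := Finset.mem_filter.mp hp
      obtain ⟨hab, hi⟩ := Finset.mem_product.mp hp1
      obtain ⟨habE, har, hbr⟩ := Finset.mem_filter.mp hab
      obtain ⟨hi1, hiD⟩ := Finset.mem_Icc.mp hi
      exact Or.inl ⟨a, b, i, rfl, habE, har, hbr, hi1, hp2⟩
    · obtain ⟨⟨a, b⟩, hp, rfl⟩ := Finset.mem_image.mp h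
      obtain ⟨habE, har, hbr, hdD⟩ := Finset.mem_filter.mp hp
      subst har
      exact Or.inr (Or.inl ⟨b, rfl, habE, hbr, hdD⟩)
  · obtain ⟨⟨t, i⟩, hp, rfl⟩ := Finset.mem_image.mp h
    obtain ⟨ht, hi⟩ := Finset.mem_product.mp hp
    obtain ⟨hi1, hiD⟩ := Finset.mem_Icc.mp hi
    exact Or.inr (Or.inr ⟨t, i, rfl, (Finset.mem_erase.mp ht).2,
      (Finset.mem_erase.mp ht).1, hi1, hiD⟩)

lemma toG {V : Type*} [Fintype V] [DecidableEq V]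
    (E : Finset (V × V)) (S : Finset V) (r : V)
    (c : V × V → ℕ) (d : V × V → ℕ)
    (hd : ∀ e ∈ E, 0 < d e) (D : ℕ) (R : Finset (AuxV V × AuxV V))
    (hRA : R ⊆ auxEdges E d S r D)
    (hTree : IsDirSteinerTree R (Sum.inl r) (auxTerminals S)) :
    ∃ R' ⊆ E, IsDirSteinerTree R' r S ∧
      (∀ t ∈ S, ∃ k ≤ D, DelayReaches R' d r t k) ∧
      treeCost c R' ≤ treeCost (auxCost c) R := by
  classical
  obtain ⟨hroot, hindeg, htails, hterm⟩ := hTree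
  set W : Finset V := Finset.univ.filter
    (fun v => v ≠ r ∧ ∃ i, Reaches R (Sum.inl r) (Sum.inr (v, i))) with hWdef
  have hWmem : ∀ v, v ∈ W ↔ v ≠ r ∧ ∃ i, Reaches R (Sum.inl r) (Sum.inr (v, i)) := by
    intro v; simp [hWdef]
  set L : V → ℕ := fun v => sInf {i | Reaches R (Sum.inl r) (Sum.inr (v, i))}
    with hLdef
  have hLreach : ∀ v ∈ W, Reaches R (Sum.inl r) (Sum.inr (v, L v)) := by
    intro v hv
    have hne : {i | Reaches R (Sum.inl r) (Sum.inr (v, i))}.Nonempty :=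
      ((hWmem v).mp hv).2
    exact Nat.sInf_mem hne
  have hLmin : ∀ v i, Reaches R (Sum.inl r) (Sum.inr (v, i)) → L v ≤ i := by
    intro v i h; exact Nat.sInf_le h
  have hpar : ∀ v ∈ W, ∃ u j, (u, v) ∈ E ∧ j + d (u, v) = L v ∧ L v ≤ D ∧
      ((u = r ∧ j = 0 ∧ (Sum.inl r, Sum.inr (v, L v)) ∈ R) ∨
       (u ≠ r ∧ 1 ≤ j ∧ Reaches R (Sum.inl r) (Sum.inr (u, j)) ∧
         (Sum.inr (u, j), Sum.inr (v, L v)) ∈ R)) := by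
    intro v hv
    have hv' := hLreach v hv
    rcases hv'.cases_tail with heq | ⟨p, hp, hstep⟩
    · exact absurd heq (by simp)
    · rcases auxEdges_shape (hRA hstep) with
        ⟨a, b, i, heq, habE, har, hbr, hi1, hiD⟩ | ⟨b, heq, habE, hbr, hdD⟩ |
        ⟨t, i, heq, htS, htr, hi1, hiD⟩
      · have hp1 : p = Sum.inr (a, i) := congrArg Prod.fst heq
        have hp2 : (Sum.inr (v, L v) : AuxV V) = Sum.inr (b, i + d (a, b)) :=
          congrArg Prod.snd heq
        have hvb : v = b := by
          have := Sum.inr.inj hp2; exact congrArg Prod.fst this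
        have hLv : L v = i + d (a, b) := by
          have := Sum.inr.inj hp2; exact congrArg Prod.snd this
        subst hvb
        refine ⟨a, i, habE, hLv.symm, by omega, Or.inr ⟨har, hi1, ?_, ?_⟩⟩
        · rw [← hp1]; exact hp
        · rw [← hp1]; exact hstep
      · have hp1 : p = Sum.inl r := congrArg Prod.fst heq
        have hp2 : (Sum.inr (v, L v) : AuxV V) = Sum.inr (b, d (r, b)) :=
          congrArg Prod.snd heq
        have hvb : v = b := by
          have := Sum.inr.inj hp2; exact congrArg Prod.fst this
        have hLv : L v = d (r, b) := by
          have := Sum.inr.inj hp2; exact congrArg Prod.snd this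
        subst hvb
        refine ⟨r, 0, habE, by omega, by omega, Or.inl ⟨rfl, rfl, ?_⟩⟩
        rw [← hp1]; exact hstep
      · exact absurd (congrArg Prod.snd heq) (by simp)
  set parent : V → V := fun v => if h : v ∈ W then (hpar v h).choose else v
    with hparentdef
  set pj : V → ℕ := fun v =>
    if h : v ∈ W then (hpar v h).choose_spec.choose else 0 with hpjdef
  have hparspec : ∀ v, ∀ h : v ∈ W, (parent v, v) ∈ E ∧
      pj v + d (parent v, v) = L v ∧ L v ≤ D ∧
      ((parent v = r ∧ pj v = 0 ∧ (Sum.inl r, Sum.inr (v, L v)) ∈ R) ∨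
       (parent v ≠ r ∧ 1 ≤ pj v ∧
         Reaches R (Sum.inl r) (Sum.inr (parent v, pj v)) ∧
         (Sum.inr (parent v, pj v), Sum.inr (v, L v)) ∈ R)) := by
    intro v h
    simp only [hparentdef, hpjdef, dif_pos h]
    exact (hpar v h).choose_spec.choose_spec
  set R' : Finset (V × V) := W.image (fun v => (parent v, v)) with hR'def
  have hshape' : ∀ x ∈ R', ∃ v ∈ W, x = (parent v, v) := by
    intro x hx
    obtain ⟨v, hv, rfl⟩ := Finset.mem_image.mp hx
    exact ⟨v, hv, rfl⟩
  have hedge' : ∀ v ∈ W, (parent v, v) ∈ R' := by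
    intro v hv
    exact Finset.mem_image.mpr ⟨v, hv, rfl⟩
  have hR'E : R' ⊆ E := by
    intro x hx
    obtain ⟨v, hv, rfl⟩ := hshape' x hx
    exact (hparspec v hv).1
  -- main delay claim
  have key : ∀ n v, v ∈ W → L v ≤ n → ∃ m ≤ L v, DelayReaches R' d r v m := by
    intro n
    induction n using Nat.strong_induction_on with
    | _ n ih =>
      intro v hv hLn
      obtain ⟨hE, hsum, hLD, hbr⟩ := hparspec v hv
      rcases hbr with ⟨hur, hj0, _⟩ | ⟨hur, hj1, hreachu, _⟩
      · refine ⟨L v, le_rfl, ?_⟩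
        have hmem : (r, v) ∈ R' := by rw [← hur]; exact hedge' v hv
        have : DelayReaches R' d r v (0 + d (r, v)) :=
          Relation.ReflTransGen.single ⟨hmem, rfl⟩
        have hdd : 0 + d (r, v) = L v := by rw [← hur]; omega
        rwa [hdd] at this
      · have huW : parent v ∈ W := (hWmem _).mpr ⟨hur, pj v, hreachu⟩
        have hLu : L (parent v) ≤ pj v := hLmin _ _ hreachu
        have hdpos : 0 < d (parent v, v) := hd _ hE
        have hlt : L (parent v) < n := by omega
        obtain ⟨m, hm, hdm⟩ := ih (L (parent v)) hlt (parent v) huW le_rfl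
        exact ⟨m + d (parent v, v), by omega, hdm.tail ⟨hedge' v hv, rfl⟩⟩
  have hWdel : ∀ v ∈ W, ∃ m ≤ D, DelayReaches R' d r v m := by
    intro v hv
    obtain ⟨m, hm, hdm⟩ := key (L v) v hv le_rfl
    exact ⟨m, le_trans hm (hparspec v hv).2.2.1, hdm⟩
  have hWreaches : ∀ v ∈ W, Reaches R' r v := by
    intro v hv
    obtain ⟨m, _, hdm⟩ := hWdel v hv
    exact delayReaches_reaches hdm
  have htW : ∀ t ∈ S, t ≠ r → t ∈ W := by
    intro t htS htr
    have h1 : Reaches R (Sum.inl r) (Sum.inl t) :=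
      hterm _ (Finset.mem_image.mpr ⟨t, htS, rfl⟩)
    rcases h1.cases_tail with heq | ⟨p, hp, hstep⟩
    · exact absurd (Sum.inl.inj heq) htr
    · rcases auxEdges_shape (hRA hstep) with
        ⟨a, b, i, heq, _⟩ | ⟨b, heq, _⟩ | ⟨t', i, heq, ht'S, ht'r, hi1, hiD⟩
      · exact absurd (congrArg Prod.snd heq) (by simp)
      · exact absurd (congrArg Prod.snd heq) (by simp)
      · have ht't : t' = t := Sum.inl.inj (congrArg Prod.snd heq).symm
        have hp1 : p = Sum.inr (t', i) := congrArg Prod.fst heq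
        refine (hWmem t).mpr ⟨htr, i, ?_⟩
        rw [← ht't, ← hp1]; exact hp
  have hTree' : IsDirSteinerTree R' r S := by
    refine ⟨?_, ?_, ?_, ?_⟩
    · intro x hx
      obtain ⟨v, hv, rfl⟩ := hshape' x hx
      exact ((hWmem v).mp hv).1
    · intro w
      rw [Finset.card_le_one]
      intro a ha b hb
      obtain ⟨haR, ha2⟩ := Finset.mem_filter.mp ha
      obtain ⟨hbR, hb2⟩ := Finset.mem_filter.mp hb
      obtain ⟨v1, hv1, rfl⟩ := hshape' a haR
      obtain ⟨v2, hv2, rfl⟩ := hshape' b hbR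
      have : v1 = v2 := by
        have h1 : v1 = w := ha2
        have h2 : v2 = w := hb2
        rw [h1, h2]
      rw [this]
    · intro x hx
      obtain ⟨v, hv, rfl⟩ := hshape' x hx
      by_cases hpr : parent v = r
      · show Reaches R' r (parent v)
        rw [hpr]
        exact Relation.ReflTransGen.refl
      · obtain ⟨_, _, _, hbr⟩ := hparspec v hv
        rcases hbr with ⟨h1, _⟩ | ⟨_, _, hreachu, _⟩
        · exact absurd h1 hpr
        · exact hWreaches _ ((hWmem _).mpr ⟨hpr, pj v, hreachu⟩)
    · intro t htS
      by_cases htr : t = r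
      · rw [htr]
        exact Relation.ReflTransGen.refl
      · exact hWreaches t (htW t htS htr)
  have hdel' : ∀ t ∈ S, ∃ k ≤ D, DelayReaches R' d r t k := by
    intro t htS
    by_cases htr : t = r
    · refine ⟨0, Nat.zero_le _, ?_⟩
      rw [htr]
      exact Relation.ReflTransGen.refl
    · exact hWdel t (htW t htS htr)
  refine ⟨R', hR'E, hTree', hdel', ?_⟩
  -- cost bound
  set eps : V → AuxV V × AuxV V := fun v =>
    if parent v = r then (Sum.inl r, Sum.inr (v, L v))
    else (Sum.inr (parent v, pj v), Sum.inr (v, L v)) with hepsdef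
  have heps2 : ∀ v, (eps v).2 = Sum.inr (v, L v) := by
    intro v
    by_cases h : parent v = r <;> simp [hepsdef, h]
  have hepsmem : ∀ v ∈ W, eps v ∈ R := by
    intro v hv
    obtain ⟨_, _, _, hbr⟩ := hparspec v hv
    rcases hbr with ⟨h1, _, hmem⟩ | ⟨h1, _, _, hmem⟩
    · simp only [hepsdef, if_pos h1]; exact hmem
    · simp only [hepsdef, if_neg h1]; exact hmem
  have hepscost : ∀ v ∈ W, auxCost c (eps v) = c (parent v, v) := by
    intro v hv
    by_cases h1 : parent v = r
    · simp only [hepsdef, if_pos h1]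
      rw [h1]; rfl
    · simp only [hepsdef, if_neg h1]; rfl
  have hepsinj : ∀ v1 ∈ W, ∀ v2 ∈ W, eps v1 = eps v2 → v1 = v2 := by
    intro v1 _ v2 _ h
    have := (heps2 v1).symm.trans ((congrArg Prod.snd h).trans (heps2 v2))
    exact congrArg Prod.fst (Sum.inr.inj this)
  have hinj2 : ∀ v1 ∈ W, ∀ v2 ∈ W,
      (parent v1, v1) = (parent v2, v2) → v1 = v2 := by
    intro v1 _ v2 _ h
    exact congrArg Prod.snd h
  calc treeCost c R' = ∑ v ∈ W, c (parent v, v) := by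
        rw [hR'def, treeCost, Finset.sum_image hinj2]
    _ = ∑ v ∈ W, auxCost c (eps v) := Finset.sum_congr rfl
        (fun v hv => (hepscost v hv).symm)
    _ = ∑ x ∈ W.image eps, auxCost c x := (Finset.sum_image hepsinj).symm
    _ ≤ treeCost (auxCost c) R := by
        rw [treeCost]
        refine Finset.sum_le_sum_of_subset ?_
        intro x hx
        obtain ⟨v, hv, rfl⟩ := Finset.mem_image.mp hx
        exact hepsmem v hv

/-- Theorem 2 of the paper, both directions combined.
The minimum cost of an `r`-rooted directed Steiner tree spanning `S_H` in
the layered auxiliary graph `H` equals the minimum cost of a Steiner tree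
of `G` rooted at `r` spanning `S` in which the delay from `r` to every
terminal is at most `D`; in particular such a tree exists in `H` iff one
exists in `G`. -/
theorem aux_steiner_tree_min_cost_eq
    {V : Type*} [Fintype V] [DecidableEq V]
    (E : Finset (V × V)) (S : Finset V) (r : V) (hr : r ∈ S)
    (c : V × V → ℕ) (d : V × V → ℕ)
    (hc : ∀ e ∈ E, 0 < c e) (hd : ∀ e ∈ E, 0 < d e)
    (D : ℕ) (hD : 0 < D) :
    sInf {C : ℕ | ∃ R ⊆ auxEdges E d S r D,
        IsDirSteinerTree R (Sum.inl r) (auxTerminals S) ∧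
        treeCost (auxCost c) R = C}
      = sInf {C : ℕ | ∃ R' ⊆ E, IsDirSteinerTree R' r S ∧
          (∀ t ∈ S, ∃ k ≤ D, DelayReaches R' d r t k) ∧
          treeCost c R' = C} ∧
    ({C : ℕ | ∃ R ⊆ auxEdges E d S r D,
        IsDirSteinerTree R (Sum.inl r) (auxTerminals S) ∧
        treeCost (auxCost c) R = C}.Nonempty
      ↔ {C : ℕ | ∃ R' ⊆ E, IsDirSteinerTree R' r S ∧
          (∀ t ∈ S, ∃ k ≤ D, DelayReaches R' d r t k) ∧
          treeCost c R' = C}.Nonempty) := by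
    classical
  set A := {C : ℕ | ∃ R ⊆ auxEdges E d S r D,
      IsDirSteinerTree R (Sum.inl r) (auxTerminals S) ∧
      treeCost (auxCost c) R = C} with hAdef
  set B := {C : ℕ | ∃ R' ⊆ E, IsDirSteinerTree R' r S ∧
      (∀ t ∈ S, ∃ k ≤ D, DelayReaches R' d r t k) ∧
      treeCost c R' = C} with hBdef
  have KeyA : ∀ C ∈ A, ∃ C' ∈ B, C' ≤ C := by
    rintro C hC
    simp only [hAdef, Set.mem_setOf_eq] at hC
    obtain ⟨R, hRA, hT, rfl⟩ := hC
    obtain ⟨R', hR'E, hT', hdel', hcost⟩ := toG E S r c d hd D R hRA hT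
    exact ⟨treeCost c R', ⟨R', hR'E, hT', hdel', rfl⟩, hcost⟩
  have KeyB : ∀ C ∈ B, ∃ C' ∈ A, C' ≤ C := by
    rintro C hC
    simp only [hBdef, Set.mem_setOf_eq] at hC
    obtain ⟨R', hR'E, hT', hdel', rfl⟩ := hC
    obtain ⟨R, hRA, hT, hcost⟩ := toAux E S r c d hd D R' hR'E hT' hdel'
    exact ⟨treeCost (auxCost c) R, ⟨R, hRA, hT, rfl⟩, hcost⟩
  constructor
  · by_cases hA : A.Nonempty
    · have hB : B.Nonempty := by
        obtain ⟨C, hC⟩ := hA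
        obtain ⟨C', hC', _⟩ := KeyA C hC
        exact ⟨C', hC'⟩
      apply le_antisymm
      · obtain ⟨C', hC'A, hle⟩ := KeyB (sInf B) (Nat.sInf_mem hB)
        exact le_trans (Nat.sInf_le hC'A) hle
      · obtain ⟨C', hC'B, hle⟩ := KeyA (sInf A) (Nat.sInf_mem hA)
        exact le_trans (Nat.sInf_le hC'B) hle
    · have hB : ¬ B.Nonempty := by
        rintro ⟨C, hC⟩
        obtain ⟨C', hC'A, _⟩ := KeyB C hC
        exact hA ⟨C', hC'A⟩
      rw [Set.not_nonempty_iff_eq_empty.mp hA, Set.not_nonempty_iff_eq_empty.mp hB]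
  · constructor
    · rintro ⟨C, hC⟩
      obtain ⟨C', hC'B, _⟩ := KeyA C hC
      exact ⟨C', hC'B⟩
    · rintro ⟨C, hC⟩
      obtain ⟨C', hC'A, _⟩ := KeyB C hC
      exact ⟨C', hC'A⟩
end

section
/- Let n and D be positive integers, let ε > 0 be a real number, and let d : P → ℤ≥1 assign a positive integer delay to each element of a finite set P with |P| ≤ n. If ∑_{e∈P} ⌊n·d(e)/(ε·D)⌋ ≤ ⌊n/ε⌋, then ∑_{e∈P} d(e) < (1+ε)·D. -/
/-- Inequalities (1)–(3) in the proof of Theorem 4.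
Let `n` and `D` be positive integers, `ε > 0` a real number, and let
`d : P → ℕ` assign a positive integer delay to each element of a finite set
`P` with `|P| ≤ n`.  If `∑_{e ∈ P} ⌊n·d(e)/(ε·D)⌋ ≤ ⌊n/ε⌋`, then
`∑_{e ∈ P} d(e) < (1+ε)·D`. -/
theorem scaled_delay_bound_implies_delay_bound
    (n D : ℕ) (hn : 0 < n) (hD : 0 < D) (ε : ℝ) (hε : 0 < ε)
    (P : Type*) [Fintype P] (d : P → ℕ) (hd : ∀ e : P, 1 ≤ d e)
    (hcard : Fintype.card P ≤ n)
    (h : ∑ e : P, ⌊((n : ℝ) * (d e : ℝ)) / (ε * (D : ℝ))⌋ ≤ ⌊(n : ℝ) / ε⌋) :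
    ((∑ e : P, d e : ℕ) : ℝ) < (1 + ε) * (D : ℝ) := by
  have hDpos : (0:ℝ) < D := by exact_mod_cast hD
  have hnpos : (0:ℝ) < n := by exact_mod_cast hn
  rcases isEmpty_or_nonempty P with hP | hP
  · simp only [Finset.univ_eq_empty, Finset.sum_empty, Nat.cast_zero]
    positivity
  · have hne : (Finset.univ : Finset P).Nonempty := Finset.univ_nonempty
    have h2 : ∑ e : P, (((n : ℝ) * (d e : ℝ)) / (ε * (D : ℝ)) - 1)
        < ∑ e : P, (⌊((n : ℝ) * (d e : ℝ)) / (ε * (D : ℝ))⌋ : ℝ) :=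
      Finset.sum_lt_sum_of_nonempty hne (fun e _ => Int.sub_one_lt_floor _)
    have h1 : ((∑ e : P, ⌊((n : ℝ) * (d e : ℝ)) / (ε * (D : ℝ))⌋ : ℤ) : ℝ)
        ≤ (n : ℝ) / ε := le_trans (by exact_mod_cast h) (Int.floor_le _)
    push_cast at h1
    have h3 : ∑ e : P, (((n : ℝ) * (d e : ℝ)) / (ε * (D : ℝ)) - 1)
        < (n : ℝ) / ε := lt_of_lt_of_le h2 h1
    have hsum : ∑ e : P, (((n : ℝ) * (d e : ℝ)) / (ε * (D : ℝ)) - 1)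
        = (n : ℝ) * ((∑ e : P, d e : ℕ) : ℝ) / (ε * D) - Fintype.card P := by
      rw [Finset.sum_sub_distrib]
      push_cast
      rw [← Finset.sum_div, ← Finset.mul_sum]
      simp [Finset.card_univ]
    rw [hsum] at h3
    have hc : ((Fintype.card P : ℝ)) ≤ (n : ℝ) := by exact_mod_cast hcard
    set S := ((∑ e : P, d e : ℕ) : ℝ) with hS
    have hεD : (0:ℝ) < ε * D := by positivity
    rw [sub_lt_iff_lt_add, div_lt_iff₀ hεD] at h3
    have : (n : ℝ) * S < ((n:ℝ)/ε + n) * (ε * D) := by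
      calc (n:ℝ) * S < ((n:ℝ)/ε + Fintype.card P) * (ε * D) := h3
        _ ≤ ((n:ℝ)/ε + n) * (ε * D) := by
            apply mul_le_mul_of_nonneg_right _ (le_of_lt hεD)
            linarith
    have hexp : ((n:ℝ)/ε + n) * (ε * D) = (n:ℝ) * ((1 + ε) * D) := by
      field_simp
    rw [hexp] at this
    exact lt_of_mul_lt_mul_left this (le_of_lt hnpos)
end
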